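/- arXiv:2303.13901 — 3 statements merged into one kernel-verified Lean document; each statement's English description precedes it below -/
import Mathlib

section
/- Let n ≥ 1, κ > 0, K ⊂ ℝ^n compact, and let (μ0^N), (μ1^N) be sequences of finite nonnegative Borel measures supported in K converging narrowly to μ0 and μ1 respectively, where μ0 is absolutely continuous with respect to Lebesgue measure. Let (π^N) be finite nonnegative measures on K × K with KL(π0^N|μ0^N) < ∞ and ∫ c_κ dπ^N < ∞, such that the measures (1/cos(|x−y|/κ))·π^N converge narrowly to (1/cos(|x−y|/κ))·π, where π is the (unique) minimizer of E_κ(·|μ0,μ1). Let (v0^N, α0^N) be the barycentric HK logarithmic components of π^N relative to μ0^N, and (v0, α0) those of π relative to μ0. Then for every continuous vector field φ : K → ℝ^n and every continuous function ψ : K → ℝ, ∫ ⟨φ, v0^N⟩ dμ0^N → ∫ ⟨φ, v0⟩ dμ0 and ∫ ψ α0^N dμ0^N → ∫ ψ α0 dμ0 as N → ∞. -/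
open MeasureTheory ENNReal Filter Topology RealInnerProductSpace
open scoped Classical

noncomputable section

abbrev Eucl (n : ℕ) : Type := EuclideanSpace ℝ (Fin n)

/-- Truncated cosine `Cos`. -/
def truncCos (s : ℝ) : ℝ := Real.cos (min |s| (Real.pi / 2))

/-- The Hellinger–Kantorovich cost function `c_κ`. -/
def cHK {n : ℕ} (κ : ℝ) (x y : Eucl n) : ℝ≥0∞ :=
  if dist x y < κ * Real.pi / 2 then
    ENNReal.ofReal (-2 * κ ^ 2 * Real.log (Real.cos (dist x y / κ)))
  else ⊤

/-- Kullback–Leibler divergence `KL(ρ|μ)`. -/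
def KLdiv {α : Type*} [MeasurableSpace α] (ρ μ : Measure α) : ℝ≥0∞ :=
  if ρ ≪ μ then
    ∫⁻ x, ENNReal.ofReal ((ρ.rnDeriv μ x).toReal * Real.log (ρ.rnDeriv μ x).toReal
      - (ρ.rnDeriv μ x).toReal + 1) ∂μ
  else ⊤

/-- The soft-marginal Hellinger–Kantorovich functional `E_κ(π|μ0,μ1)`. -/
def HKfun {n : ℕ} (κ : ℝ) (π : Measure (Eucl n × Eucl n)) (μ0 μ1 : Measure (Eucl n)) : ℝ≥0∞ :=
  ∫⁻ p, cHK κ p.1 p.2 ∂π + ENNReal.ofReal (κ ^ 2) * KLdiv (π.map Prod.fst) μ0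
    + ENNReal.ofReal (κ ^ 2) * KLdiv (π.map Prod.snd) μ1

/-- The squared Hellinger–Kantorovich distance `HK_κ²(μ0,μ1)`. -/
def HK2 {n : ℕ} (κ : ℝ) (μ0 μ1 : Measure (Eucl n)) : ℝ≥0∞ :=
  ⨅ (π : Measure (Eucl n × Eucl n)) (_ : IsFiniteMeasure π), HKfun κ π μ0 μ1

/-- The squared 2-Wasserstein distance `W2²(μ0,μ1)`. -/
def W2sq {n : ℕ} (μ0 μ1 : Measure (Eucl n)) : ℝ≥0∞ :=
  ⨅ (π : Measure (Eucl n × Eucl n))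
    (_ : π.map Prod.fst = μ0 ∧ π.map Prod.snd = μ1),
      ∫⁻ p, ENNReal.ofReal (dist p.1 p.2 ^ 2) ∂π

/-- Narrow convergence of a sequence of measures. -/
def NarrowTendsto {α : Type*} [MeasurableSpace α] [TopologicalSpace α]
    (ρ : ℕ → Measure α) (ρlim : Measure α) : Prop :=
  ∀ φ : BoundedContinuousFunction α ℝ,
    Tendsto (fun N => ∫ x, φ x ∂(ρ N)) atTop (𝓝 (∫ x, φ x ∂ρlim))

/-- The spherical Hellinger–Kantorovich distance `SHK_κ(μ0,μ1)`. -/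
def SHK {n : ℕ} (κ : ℝ) (μ0 μ1 : Measure (Eucl n)) : ℝ :=
  κ * Real.arccos (1 - (HK2 κ μ0 μ1).toReal / (2 * κ ^ 2))

/-- The square-root measure `√(ρσ)`. -/
def sqrtMeasure {α : Type*} [MeasurableSpace α] (ρ σ : Measure α) : Measure α :=
  (ρ + σ).withDensity (fun x => (ρ.rnDeriv (ρ + σ) x * σ.rnDeriv (ρ + σ) x) ^ (1/2 : ℝ))



/-- barycentric HK velocity. -/
def barV {n : ℕ} (κ : ℝ) (μ0 : Measure (Eucl n)) (π : Measure (Eucl n × Eucl n))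
    [IsFiniteMeasure π] (x : Eucl n) : Eucl n :=
  (κ * ((π.map Prod.fst).rnDeriv μ0 x).toReal) •
    ∫ y, (Real.tan (‖y - x‖ / κ) / ‖y - x‖) • (y - x) ∂(π.condKernel x)

/-- barycentric HK growth. -/
def barA {n : ℕ} (μ0 : Measure (Eucl n)) (π : Measure (Eucl n × Eucl n)) (x : Eucl n) : ℝ :=
  2 * (((π.map Prod.fst).rnDeriv μ0 x).toReal - 1)

/-- barycentric W2 velocity. -/
def barW {n : ℕ} (π : Measure (Eucl n × Eucl n)) [IsFiniteMeasure π] (x : Eucl n) : Eucl n :=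
  ∫ y, (y - x) ∂(π.condKernel x)

end

open scoped NNReal

noncomputable section

-- helper 1
lemma KLdiv_ne_top_ac {α : Type*} [MeasurableSpace α] {ρ μ : Measure α}
    (h : KLdiv ρ μ ≠ ⊤) : ρ ≪ μ := by
  by_contra hc; simp [KLdiv, hc] at h

-- helper 2 : ae dist
lemma ae_dist_lt {n : ℕ} {κ : ℝ} (π : Measure (Eucl n × Eucl n))
    (hcost : ∫⁻ p, cHK κ p.1 p.2 ∂π ≠ ⊤) :
    ∀ᵐ p ∂π, dist p.1 p.2 < κ * Real.pi / 2 := by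
  rw [ae_iff]
  set S := {p : Eucl n × Eucl n | ¬ dist p.1 p.2 < κ * Real.pi / 2} with hS
  have hSmeas : MeasurableSet S :=
    (measurableSet_lt (by fun_prop : Measurable fun p : Eucl n × Eucl n => dist p.1 p.2)
      measurable_const).compl
  by_contra h
  apply hcost
  have h1 : ∫⁻ p in S, cHK κ p.1 p.2 ∂π = ⊤ := by
    have e1 : ∫⁻ p in S, cHK κ p.1 p.2 ∂π = ∫⁻ _ in S, (⊤ : ℝ≥0∞) ∂π :=
      setLIntegral_congr_fun hSmeas
        (fun p (hp : p ∈ S) => (if_neg hp : cHK κ p.1 p.2 = ⊤))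
    rw [e1, setLIntegral_const, ENNReal.top_mul h]
  exact top_unique (h1 ▸ setLIntegral_le_lintegral S _)

lemma ae_cos_pos {n : ℕ} {κ : ℝ} (hκ : 0 < κ) (π : Measure (Eucl n × Eucl n))
    (hcost : ∫⁻ p, cHK κ p.1 p.2 ∂π ≠ ⊤) :
    ∀ᵐ p ∂π, 0 < Real.cos (dist p.1 p.2 / κ) := by
  filter_upwards [ae_dist_lt π hcost] with p hp
  apply Real.cos_pos_of_mem_Ioo
  constructor
  · have : (0:ℝ) ≤ dist p.1 p.2 / κ := by positivity
    linarith [Real.pi_pos]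
  · rw [div_lt_iff₀ hκ]; linarith

lemma ae_mem_KK {n : ℕ} (K : Set (Eucl n)) (π : Measure (Eucl n × Eucl n))
    (hπK : π (K ×ˢ K)ᶜ = 0) : ∀ᵐ p ∂π, p.1 ∈ K ∧ p.2 ∈ K := by
  have e : {p : Eucl n × Eucl n | ¬(p.1 ∈ K ∧ p.2 ∈ K)} = (K ×ˢ K)ᶜ := by
    ext p; simp [Set.mem_prod]
  rw [ae_iff, e]; exact hπK

def Vtan {n : ℕ} (κ : ℝ) (p : Eucl n × Eucl n) : Eucl n :=
  (Real.tan (‖p.2 - p.1‖ / κ) / ‖p.2 - p.1‖) • (p.2 - p.1)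

def Vsin {n : ℕ} (κ : ℝ) (p : Eucl n × Eucl n) : Eucl n :=
  (Real.sin (‖p.2 - p.1‖ / κ) / ‖p.2 - p.1‖) • (p.2 - p.1)

lemma norm_Vsin_le {n : ℕ} (κ : ℝ) (p : Eucl n × Eucl n) :
    ‖Vsin κ p‖ ≤ |Real.sin (‖p.2 - p.1‖ / κ)| := by
  rcases eq_or_ne (p.2 - p.1) 0 with h | h
  · simp [Vsin, h]
  · have hd : (0:ℝ) < ‖p.2 - p.1‖ := norm_pos_iff.mpr h
    rw [Vsin, norm_smul, Real.norm_eq_abs, abs_div, abs_of_pos hd, div_mul_cancel₀]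
    exact hd.ne'

lemma norm_Vsin_le_one {n : ℕ} (κ : ℝ) (p : Eucl n × Eucl n) : ‖Vsin κ p‖ ≤ 1 :=
  (norm_Vsin_le κ p).trans (Real.abs_sin_le_one _)

lemma continuous_Vsin {n : ℕ} (κ : ℝ) (hκ : 0 < κ) : Continuous (Vsin (n := n) κ) := by
  rw [continuous_iff_continuousAt]
  intro p
  rcases eq_or_ne (p.2 - p.1) 0 with h | h
  · have hV : Vsin (n := n) κ p = 0 := by simp [Vsin, h]
    rw [ContinuousAt, hV]
    apply squeeze_zero_norm (norm_Vsin_le κ)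
    have : Continuous fun q : Eucl n × Eucl n => |Real.sin (‖q.2 - q.1‖ / κ)| := by
      fun_prop
    simpa [ContinuousAt, h] using this.continuousAt (x := p)
  · have hd : (0:ℝ) < ‖p.2 - p.1‖ := norm_pos_iff.mpr h
    apply ContinuousAt.fun_smul
    · exact ContinuousAt.div (by fun_prop) (by fun_prop) hd.ne'
    · fun_prop

lemma cos_smul_Vtan {n : ℕ} (κ : ℝ) (p : Eucl n × Eucl n)
    (hc : Real.cos (‖p.2 - p.1‖ / κ) ≠ 0) :
    (Real.cos (‖p.2 - p.1‖ / κ))⁻¹ • Vsin κ p = Vtan κ p := by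
  rcases eq_or_ne (p.2 - p.1) 0 with h | h
  · simp [Vsin, Vtan, h]
  · have hd : ‖p.2 - p.1‖ ≠ 0 := norm_ne_zero_iff.mpr h
    rw [Vsin, Vtan, smul_smul, Real.tan_eq_sin_div_cos]
    congr 1
    field_simp

lemma norm_Vtan_le {n : ℕ} (κ : ℝ) (p : Eucl n × Eucl n)
    (hc : 0 < Real.cos (‖p.2 - p.1‖ / κ)) :
    ‖Vtan κ p‖ ≤ (Real.cos (‖p.2 - p.1‖ / κ))⁻¹ := by
  rw [← cos_smul_Vtan κ p hc.ne', norm_smul, Real.norm_eq_abs,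
    abs_of_pos (inv_pos.mpr hc)]
  calc (Real.cos (‖p.2 - p.1‖ / κ))⁻¹ * ‖Vsin κ p‖
      ≤ (Real.cos (‖p.2 - p.1‖ / κ))⁻¹ * 1 := by
        exact mul_le_mul_of_nonneg_left (norm_Vsin_le_one κ p) (inv_pos.mpr hc).le
    _ = (Real.cos (‖p.2 - p.1‖ / κ))⁻¹ := mul_one _

lemma measurable_Vtan {n : ℕ} (κ : ℝ) : Measurable (Vtan (n := n) κ) := by
  have : Vtan (n := n) κ = fun p =>
      ((Real.sin (‖p.2 - p.1‖ / κ) / Real.cos (‖p.2 - p.1‖ / κ)) / ‖p.2 - p.1‖) • (p.2 - p.1) := by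
    funext p; rw [Vtan, Real.tan_eq_sin_div_cos]
  rw [this]
  apply Measurable.fun_smul
  · apply Measurable.div
    · apply Measurable.div <;> fun_prop
    · fun_prop
  · fun_prop

lemma integrable_inv_cos {n : ℕ} {κ : ℝ} (π : Measure (Eucl n × Eucl n))
    (hcos : ∀ᵐ p ∂π, 0 < Real.cos (dist p.1 p.2 / κ))
    (hfin : ∫⁻ p, ENNReal.ofReal (Real.cos (dist p.1 p.2 / κ))⁻¹ ∂π ≠ ⊤) :
    Integrable (fun p => (Real.cos (dist p.1 p.2 / κ))⁻¹) π := by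
  have hmeas : Measurable fun p : Eucl n × Eucl n =>
      ENNReal.ofReal (Real.cos (dist p.1 p.2 / κ))⁻¹ := by
    apply Measurable.ennreal_ofReal
    apply Measurable.inv
    fun_prop
  have h1 := integrable_toReal_of_lintegral_ne_top hmeas.aemeasurable hfin
  apply h1.congr
  filter_upwards [hcos] with p hp
  rw [ENNReal.toReal_ofReal (by positivity)]

lemma integrable_Vtan {n : ℕ} {κ : ℝ} (π : Measure (Eucl n × Eucl n))
    (hcos : ∀ᵐ p ∂π, 0 < Real.cos (dist p.1 p.2 / κ))
    (hfin : ∫⁻ p, ENNReal.ofReal (Real.cos (dist p.1 p.2 / κ))⁻¹ ∂π ≠ ⊤) :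
    Integrable (Vtan κ) π := by
  apply Integrable.mono' (integrable_inv_cos π hcos hfin)
    (measurable_Vtan κ).aestronglyMeasurable
  filter_upwards [hcos] with p hp
  rw [dist_eq_norm'] at hp
  rw [dist_eq_norm']
  exact norm_Vtan_le κ p hp

lemma mainV {n : ℕ} {κ : ℝ} (hκ : 0 < κ) (K : Set (Eucl n))
    (μ : Measure (Eucl n)) [IsFiniteMeasure μ]
    (π : Measure (Eucl n × Eucl n)) [IsFiniteMeasure π]
    (hac : π.map Prod.fst ≪ μ)
    (hπK : π (K ×ˢ K)ᶜ = 0)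
    (hcos : ∀ᵐ p ∂π, 0 < Real.cos (dist p.1 p.2 / κ))
    (hfin : ∫⁻ p, ENNReal.ofReal (Real.cos (dist p.1 p.2 / κ))⁻¹ ∂π ≠ ⊤)
    (φ : Eucl n → Eucl n) (hφ : Continuous φ)
    {Mφ : ℝ} (hMφ : ∀ x ∈ K, ‖φ x‖ ≤ Mφ)
    (χ : C(Eucl n, ℝ)) (hχK : Set.EqOn χ 1 K) :
    ∫ x, ⟪φ x, barV κ μ π x⟫ ∂μ
      = ∫ p, (χ p.1 * χ p.2) * (κ * ⟪φ p.1, Vsin κ p⟫)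
          ∂(π.withDensity fun p => ENNReal.ofReal (Real.cos (dist p.1 p.2 / κ))⁻¹) := by
  set ftan : Eucl n × Eucl n → ℝ := fun p => κ * ⟪φ p.1, Vtan κ p⟫ with hftan_def
  have hVtan : Integrable (Vtan κ) π := integrable_Vtan π hcos hfin
  have hginteg := integrable_inv_cos π hcos hfin
  have hftan : Integrable ftan π := by
    apply Integrable.mono' ((hginteg.const_mul Mφ).const_mul |κ|)
    · exact (((hφ.comp continuous_fst).measurable.inner
        (measurable_Vtan κ)).const_mul κ).aestronglyMeasurable
    · filter_upwards [hcos, ae_mem_KK K π hπK] with p hp hpK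
      rw [dist_eq_norm'] at hp
      have h1 : |⟪φ p.1, Vtan κ p⟫| ≤ Mφ * (Real.cos (‖p.2 - p.1‖ / κ))⁻¹ := by
        refine (abs_real_inner_le_norm _ _).trans ?_
        exact mul_le_mul (hMφ _ hpK.1) (norm_Vtan_le κ p hp) (norm_nonneg _)
          ((norm_nonneg (φ p.1)).trans (hMφ _ hpK.1))
      calc ‖ftan p‖ = |κ| * |⟪φ p.1, Vtan κ p⟫| := by
            rw [hftan_def]; rw [Real.norm_eq_abs, abs_mul]
        _ ≤ |κ| * (Mφ * (Real.cos (‖p.2 - p.1‖ / κ))⁻¹) := by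
            exact mul_le_mul_of_nonneg_left h1 (abs_nonneg κ)
        _ = |κ| * (Mφ * (Real.cos (dist p.1 p.2 / κ))⁻¹) := by rw [dist_eq_norm']
  have hdens : (fun p : Eucl n × Eucl n => ENNReal.ofReal (Real.cos (dist p.1 p.2 / κ))⁻¹)
      = fun p => (((Real.cos (dist p.1 p.2 / κ))⁻¹.toNNReal : ℝ≥0) : ℝ≥0∞) := rfl
  have hdmeas : Measurable fun p : Eucl n × Eucl n =>
      (Real.cos (dist p.1 p.2 / κ))⁻¹.toNNReal := by
    apply Measurable.real_toNNReal; apply Measurable.inv; fun_prop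
  calc ∫ x, ⟪φ x, barV κ μ π x⟫ ∂μ
      = ∫ x, ((π.map Prod.fst).rnDeriv μ x).toReal •
          (κ * ⟪φ x, ∫ y, (Real.tan (‖y - x‖ / κ) / ‖y - x‖) • (y - x) ∂π.condKernel x⟫) ∂μ := by
        apply integral_congr_ae; apply ae_of_all; intro x
        simp only [barV, real_inner_smul_right, smul_eq_mul]; ring
    _ = ∫ x, (κ * ⟪φ x, ∫ y, (Real.tan (‖y - x‖ / κ) / ‖y - x‖) • (y - x) ∂π.condKernel x⟫)
          ∂(π.map Prod.fst) := integral_rnDeriv_smul hac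
    _ = ∫ x, (∫ y, ftan (x, y) ∂π.condKernel x) ∂π.fst := by
        apply integral_congr_ae
        filter_upwards [hVtan.condKernel_ae] with x hx
        have : (∫ y, (Real.tan (‖y - x‖ / κ) / ‖y - x‖) • (y - x) ∂π.condKernel x)
            = ∫ y, Vtan κ (x, y) ∂π.condKernel x := rfl
        rw [this, ← integral_inner hx (φ x), ← integral_const_mul]
    _ = ∫ p, ftan p ∂π := Measure.integral_condKernel hftan
    _ = ∫ p, ((Real.cos (dist p.1 p.2 / κ))⁻¹.toNNReal : ℝ≥0)
          • ((χ p.1 * χ p.2) * (κ * ⟪φ p.1, Vsin κ p⟫)) ∂π := by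
        apply integral_congr_ae
        filter_upwards [hcos, ae_mem_KK K π hπK] with p hp hpK
        have hχ1 : χ p.1 = 1 := hχK hpK.1
        have hχ2 : χ p.2 = 1 := hχK hpK.2
        have hp' : Real.cos (‖p.2 - p.1‖ / κ) ≠ 0 := by rw [← dist_eq_norm']; exact hp.ne'
        have hsm : (Real.cos (dist p.1 p.2 / κ))⁻¹ • Vsin κ p = Vtan κ p := by
          rw [dist_eq_norm']; exact cos_smul_Vtan κ p hp'
        show κ * ⟪φ p.1, Vtan κ p⟫ = _
        rw [NNReal.smul_def, Real.coe_toNNReal _ (by positivity), hχ1, hχ2, ← hsm,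
          real_inner_smul_right, smul_eq_mul]
        ring
    _ = ∫ p, (χ p.1 * χ p.2) * (κ * ⟪φ p.1, Vsin κ p⟫)
          ∂(π.withDensity fun p => ENNReal.ofReal (Real.cos (dist p.1 p.2 / κ))⁻¹) := by
        rw [hdens]
        exact (integral_withDensity_eq_integral_smul hdmeas _).symm

lemma mainA {n : ℕ} {κ : ℝ} (hκ : 0 < κ) (K : Set (Eucl n))
    (μ : Measure (Eucl n)) [IsFiniteMeasure μ] (hμK : μ Kᶜ = 0)
    (π : Measure (Eucl n × Eucl n)) [IsFiniteMeasure π]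
    (hac : π.map Prod.fst ≪ μ)
    (hπK : π (K ×ˢ K)ᶜ = 0)
    (hcos : ∀ᵐ p ∂π, 0 < Real.cos (dist p.1 p.2 / κ))
    (ψ : Eucl n → ℝ) (hψ : Continuous ψ)
    {Mψ : ℝ} (hMψ : ∀ x ∈ K, ‖ψ x‖ ≤ Mψ)
    (χ : C(Eucl n, ℝ)) (hχK : Set.EqOn χ 1 K) :
    ∫ x, ψ x * barA μ π x ∂μ
      = 2 * ∫ p, (χ p.1 * χ p.2) * (Real.cos (dist p.1 p.2 / κ) * ψ p.1)
            ∂(π.withDensity fun p => ENNReal.ofReal (Real.cos (dist p.1 p.2 / κ))⁻¹)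
        - 2 * ∫ x, χ x * ψ x ∂μ := by
  haveI : IsFiniteMeasure (π.map Prod.fst) := Measure.isFiniteMeasure_map π Prod.fst
  have haeK : ∀ᵐ x ∂μ, x ∈ K := by rw [ae_iff]; exact hμK
  have hrint : Integrable (fun x => ((π.map Prod.fst).rnDeriv μ x).toReal) μ :=
    Measure.integrable_toReal_rnDeriv
  have hψint : Integrable ψ μ := by
    apply Integrable.mono' (integrable_const Mψ) hψ.aestronglyMeasurable
    filter_upwards [haeK] with x hx using hMψ x hx
  have hψr : Integrable (fun x => ((π.map Prod.fst).rnDeriv μ x).toReal * ψ x) μ := by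
    apply Integrable.mono' (hrint.const_mul Mψ)
    · exact ((Measure.measurable_rnDeriv _ _).ennreal_toReal.mul
        hψ.measurable).aestronglyMeasurable
    · filter_upwards [haeK] with x hx
      have h0 : (0:ℝ) ≤ ((π.map Prod.fst).rnDeriv μ x).toReal := ENNReal.toReal_nonneg
      rw [Real.norm_eq_abs, abs_mul, abs_of_nonneg h0]
      calc ((π.map Prod.fst).rnDeriv μ x).toReal * |ψ x|
          ≤ ((π.map Prod.fst).rnDeriv μ x).toReal * Mψ := by
            apply mul_le_mul_of_nonneg_left _ h0
            simpa [Real.norm_eq_abs] using hMψ x hx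
        _ = Mψ * ((π.map Prod.fst).rnDeriv μ x).toReal := mul_comm _ _
  have hdens : (fun p : Eucl n × Eucl n => ENNReal.ofReal (Real.cos (dist p.1 p.2 / κ))⁻¹)
      = fun p => (((Real.cos (dist p.1 p.2 / κ))⁻¹.toNNReal : ℝ≥0) : ℝ≥0∞) := rfl
  have hdmeas : Measurable fun p : Eucl n × Eucl n =>
      (Real.cos (dist p.1 p.2 / κ))⁻¹.toNNReal := by
    apply Measurable.real_toNNReal; apply Measurable.inv; fun_prop
  have step5 : ∫ p, (χ p.1 * χ p.2) * (Real.cos (dist p.1 p.2 / κ) * ψ p.1)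
        ∂(π.withDensity fun p => ENNReal.ofReal (Real.cos (dist p.1 p.2 / κ))⁻¹)
      = ∫ p, ψ p.1 ∂π := by
    rw [hdens, integral_withDensity_eq_integral_smul hdmeas]
    apply integral_congr_ae
    filter_upwards [hcos, ae_mem_KK K π hπK] with p hp hpK
    rw [NNReal.smul_def, Real.coe_toNNReal _ (by positivity), hχK hpK.1, hχK hpK.2]
    simp only [Pi.one_apply, one_mul, smul_eq_mul]
    rw [← mul_assoc, inv_mul_cancel₀ hp.ne', one_mul]
  have step6 : ∫ x, χ x * ψ x ∂μ = ∫ x, ψ x ∂μ := by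
    apply integral_congr_ae
    filter_upwards [haeK] with x hx
    rw [hχK hx]; simp
  calc ∫ x, ψ x * barA μ π x ∂μ
      = ∫ x, (2 * (((π.map Prod.fst).rnDeriv μ x).toReal * ψ x) - 2 * ψ x) ∂μ := by
        apply integral_congr_ae; apply ae_of_all; intro x
        simp only [barA]; ring
    _ = 2 * ∫ x, ((π.map Prod.fst).rnDeriv μ x).toReal * ψ x ∂μ - 2 * ∫ x, ψ x ∂μ := by
        rw [integral_sub (hψr.const_mul 2) (hψint.const_mul 2), integral_const_mul,
          integral_const_mul]
    _ = 2 * ∫ x, ψ x ∂(π.map Prod.fst) - 2 * ∫ x, ψ x ∂μ := by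
        congr 1
        have : ∫ x, ((π.map Prod.fst).rnDeriv μ x).toReal * ψ x ∂μ
            = ∫ x, ((π.map Prod.fst).rnDeriv μ x).toReal • ψ x ∂μ := by
          simp [smul_eq_mul]
        rw [this, integral_rnDeriv_smul hac]
    _ = 2 * ∫ p, ψ p.1 ∂π - 2 * ∫ x, ψ x ∂μ := by
        rw [integral_map measurable_fst.aemeasurable hψ.aestronglyMeasurable]
    _ = _ := by rw [step5, step6]

lemma narrow_limit_null_compl {n : ℕ} (K : Set (Eucl n)) (hK : IsCompact K)
    (μN : ℕ → Measure (Eucl n)) [∀ N, IsFiniteMeasure (μN N)]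
    (hμNK : ∀ N, μN N Kᶜ = 0)
    (μ : Measure (Eucl n)) [IsFiniteMeasure μ] (hconv : NarrowTendsto μN μ) :
    μ Kᶜ = 0 := by
  have key : ∀ ε : ℝ, 0 < ε → μ (Metric.thickening ε K)ᶜ = 0 := by
    intro ε hε
    obtain ⟨f, hf1, hf0, hfc, hf01⟩ := exists_continuous_one_zero_of_isCompact hK
      Metric.isOpen_thickening.isClosed_compl
      (Set.disjoint_left.mpr fun x hx hc => hc (Metric.self_subset_thickening hε K hx))
    set F : BoundedContinuousFunction (Eucl n) ℝ :=
      BoundedContinuousFunction.ofNormedAddCommGroup f f.continuous 1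
        (fun x => by
          rcases hf01 x with ⟨h0, h1⟩
          rw [Real.norm_eq_abs, abs_le]; constructor <;> linarith) with hF
    have hFx : ∀ x, F x = f x := fun x => rfl
    have h1 : ∀ N, ∫ x, F x ∂(μN N) = ∫ x, (1:ℝ) ∂(μN N) := by
      intro N
      apply integral_congr_ae
      have haeK : ∀ᵐ x ∂(μN N), x ∈ K := by rw [ae_iff]; exact hμNK N
      filter_upwards [haeK] with x hx
      rw [hFx x, hf1 hx]; rfl
    have hFlim := hconv F
    simp only [h1] at hFlim
    have h1lim := hconv (BoundedContinuousFunction.const _ (1:ℝ))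
    simp only [BoundedContinuousFunction.const_apply] at h1lim
    have heq : ∫ x, F x ∂μ = ∫ x, (1:ℝ) ∂μ := tendsto_nhds_unique hFlim h1lim
    have hzero : ∫ x, (1 - F x) ∂μ = 0 := by
      rw [integral_sub (integrable_const 1) (F.integrable μ), heq, sub_self]
    have hint : Integrable (fun x => 1 - F x) μ := by
      exact (integrable_const (1:ℝ)).sub (F.integrable μ)
    have hnn : 0 ≤ᵐ[μ] fun x => 1 - F x := by
      apply ae_of_all; intro x
      rcases hf01 x with ⟨_, hb⟩
      simp only [Pi.zero_apply, sub_nonneg]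
      rw [hFx x]; exact hb
    have haeeq : (fun x => 1 - F x) =ᵐ[μ] 0 :=
      (integral_eq_zero_iff_of_nonneg_ae hnn hint).mp hzero
    have : μ {x | (1:ℝ) - F x ≠ 0} = 0 := by
      have := haeeq
      rw [Filter.EventuallyEq, ae_iff] at this
      simpa using this
    apply measure_mono_null _ this
    intro x hx
    simp only [Set.mem_setOf_eq]
    rw [hFx x, hf0 hx]
    norm_num
  have hsub : Kᶜ ⊆ ⋃ m : ℕ, (Metric.thickening (1/(m+1)) K)ᶜ := by
    intro x hx
    by_contra h
    simp only [Set.mem_iUnion, Set.mem_compl_iff, not_exists, not_not] at h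
    apply hx
    have hcl : x ∈ closure K := by
      rw [Metric.mem_closure_iff]
      intro ε hε
      obtain ⟨m, hm⟩ := exists_nat_one_div_lt hε
      obtain ⟨z, hz, hd⟩ := Metric.mem_thickening_iff.mp (h m)
      exact ⟨z, hz, hd.trans (by exact_mod_cast hm)⟩
    rwa [hK.isClosed.closure_eq] at hcl
  apply measure_mono_null hsub
  apply measure_iUnion_null
  intro m
  apply key
  positivity

lemma KLdiv_zero_left {α : Type*} [MeasurableSpace α] (μ : Measure α) :
    KLdiv 0 μ = μ Set.univ := by
  rw [KLdiv, if_pos (Measure.AbsolutelyContinuous.zero μ)]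
  have : ∫⁻ x, ENNReal.ofReal (((0:Measure α).rnDeriv μ x).toReal
      * Real.log ((0:Measure α).rnDeriv μ x).toReal - ((0:Measure α).rnDeriv μ x).toReal + 1) ∂μ
      = ∫⁻ _, 1 ∂μ := by
    apply lintegral_congr_ae
    filter_upwards [Measure.rnDeriv_zero μ] with x hx
    rw [hx]
    norm_num
  rw [this, lintegral_one]

lemma HK2_ne_top {n : ℕ} (κ : ℝ) (μ0 μ1 : Measure (Eucl n))
    [IsFiniteMeasure μ0] [IsFiniteMeasure μ1] : HK2 κ μ0 μ1 ≠ ⊤ := by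
  have h0 : HKfun κ (0 : Measure (Eucl n × Eucl n)) μ0 μ1 ≠ ⊤ := by
    rw [HKfun, Measure.map_zero, Measure.map_zero, lintegral_zero_measure,
      KLdiv_zero_left, KLdiv_zero_left]
    apply ENNReal.add_ne_top.mpr
    constructor
    · apply ENNReal.add_ne_top.mpr
      exact ⟨by simp, ENNReal.mul_ne_top ENNReal.ofReal_ne_top (measure_ne_top _ _)⟩
    · exact ENNReal.mul_ne_top ENNReal.ofReal_ne_top (measure_ne_top _ _)
  refine ne_top_of_le_ne_top h0 ?_
  rw [HK2]
  have hz : IsFiniteMeasure (0 : Measure (Eucl n × Eucl n)) := inferInstance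
  exact iInf_le_of_le 0 (iInf_le _ hz)

lemma HKfun_parts_ne_top {n : ℕ} {κ : ℝ} (hκ : 0 < κ) (π : Measure (Eucl n × Eucl n))
    (μ0 μ1 : Measure (Eucl n)) (h : HKfun κ π μ0 μ1 ≠ ⊤) :
    ∫⁻ p, cHK κ p.1 p.2 ∂π ≠ ⊤ ∧ KLdiv (π.map Prod.fst) μ0 ≠ ⊤
      ∧ KLdiv (π.map Prod.snd) μ1 ≠ ⊤ := by
  rw [HKfun] at h
  have h12 := (ENNReal.add_ne_top.mp h).1
  have h3 := (ENNReal.add_ne_top.mp h).2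
  have h1 := (ENNReal.add_ne_top.mp h12).1
  have h2 := (ENNReal.add_ne_top.mp h12).2
  have hκ2 : ENNReal.ofReal (κ ^ 2) ≠ 0 := (ENNReal.ofReal_pos.mpr (by positivity)).ne'
  refine ⟨h1, ?_, ?_⟩
  · intro htop; rw [htop, ENNReal.mul_top hκ2] at h2; exact h2 rfl
  · intro htop; rw [htop, ENNReal.mul_top hκ2] at h3; exact h3 rfl

lemma nu_lim_fin {n : ℕ} {κ : ℝ} (hκ : 0 < κ)
    (πN : ℕ → Measure (Eucl n × Eucl n))
    (πlim : Measure (Eucl n × Eucl n)) [IsFiniteMeasure πlim]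
    [∀ N, IsFiniteMeasure
      ((πN N).withDensity fun p => ENNReal.ofReal (Real.cos (dist p.1 p.2 / κ))⁻¹)]
    (hconv : NarrowTendsto
      (fun N => (πN N).withDensity fun p => ENNReal.ofReal (Real.cos (dist p.1 p.2 / κ))⁻¹)
      (πlim.withDensity fun p => ENNReal.ofReal (Real.cos (dist p.1 p.2 / κ))⁻¹))
    (hcos : ∀ᵐ p ∂πlim, 0 < Real.cos (dist p.1 p.2 / κ)) :
    ∫⁻ p, ENNReal.ofReal (Real.cos (dist p.1 p.2 / κ))⁻¹ ∂πlim ≠ ⊤ := by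
  intro htop
  have hdmeas0 : Measurable fun p : Eucl n × Eucl n =>
      ENNReal.ofReal (Real.cos (dist p.1 p.2 / κ))⁻¹ := by
    apply Measurable.ennreal_ofReal; apply Measurable.inv; fun_prop
  have hνuniv : (πlim.withDensity fun p => ENNReal.ofReal (Real.cos (dist p.1 p.2 / κ))⁻¹)
      Set.univ = ⊤ := by
    rw [withDensity_apply _ MeasurableSet.univ, setLIntegral_univ]
    exact htop
  -- the constant-1 test function
  have h1 := hconv (BoundedContinuousFunction.const _ (1:ℝ))
  simp only [BoundedContinuousFunction.const_apply, integral_const, smul_eq_mul, mul_one] at h1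
  simp only [measureReal_def] at h1
  rw [hνuniv] at h1
  simp only [ENNReal.toReal_top] at h1
  -- the cosine test function
  set cosf : BoundedContinuousFunction (Eucl n × Eucl n) ℝ :=
    BoundedContinuousFunction.ofNormedAddCommGroup
      (fun p => Real.cos (dist p.1 p.2 / κ)) (by fun_prop) 1
      (fun p => by rw [Real.norm_eq_abs]; exact Real.abs_cos_le_one _) with hcosf
  have hcosfx : ∀ p : Eucl n × Eucl n, cosf p = Real.cos (dist p.1 p.2 / κ) := fun p => rfl
  have h2 := hconv cosf
  -- identify the limit integral
  have hdens : (fun p : Eucl n × Eucl n => ENNReal.ofReal (Real.cos (dist p.1 p.2 / κ))⁻¹)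
      = fun p => (((Real.cos (dist p.1 p.2 / κ))⁻¹.toNNReal : ℝ≥0) : ℝ≥0∞) := rfl
  have hdmeas : Measurable fun p : Eucl n × Eucl n =>
      (Real.cos (dist p.1 p.2 / κ))⁻¹.toNNReal := by
    apply Measurable.real_toNNReal; apply Measurable.inv; fun_prop
  have e2 : ∫ p, cosf p ∂(πlim.withDensity fun p =>
        ENNReal.ofReal (Real.cos (dist p.1 p.2 / κ))⁻¹) = (πlim Set.univ).toReal := by
    rw [hdens, integral_withDensity_eq_integral_smul hdmeas]
    have : ∫ p, ((Real.cos (dist p.1 p.2 / κ))⁻¹.toNNReal : ℝ≥0) • (cosf p) ∂πlim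
        = ∫ _, (1:ℝ) ∂πlim := by
      apply integral_congr_ae
      filter_upwards [hcos] with p hp
      rw [hcosfx p, NNReal.smul_def, Real.coe_toNNReal _ (by positivity), smul_eq_mul,
        inv_mul_cancel₀ hp.ne']
    rw [this, integral_const, smul_eq_mul, mul_one, measureReal_def]
  rw [e2] at h2
  -- squeeze: the integrals of cosf tend to 0
  have h3 : Tendsto (fun N => ∫ p, cosf p ∂((πN N).withDensity fun p =>
      ENNReal.ofReal (Real.cos (dist p.1 p.2 / κ))⁻¹)) atTop (𝓝 0) := by
    apply squeeze_zero_norm _ h1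
    intro N
    have hb := norm_integral_le_of_norm_le_const
      (μ := (πN N).withDensity fun p => ENNReal.ofReal (Real.cos (dist p.1 p.2 / κ))⁻¹)
      (f := fun p => cosf p) (C := 1)
      (ae_of_all _ fun p => by show ‖cosf p‖ ≤ 1; rw [hcosfx p, Real.norm_eq_abs]; exact Real.abs_cos_le_one _)
    simpa [measureReal_def] using hb
  have hmass : (πlim Set.univ).toReal = 0 := tendsto_nhds_unique h2 h3
  have hπ0 : πlim = 0 := by
    rw [← Measure.measure_univ_eq_zero]
    rcases (ENNReal.toReal_eq_zero_iff _).mp hmass with h | h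
    · exact h
    · exact absurd h (measure_ne_top _ _)
  rw [hπ0] at hνuniv
  rw [withDensity_apply _ MeasurableSet.univ, setLIntegral_univ, lintegral_zero_measure] at hνuniv
  exact ENNReal.zero_ne_top hνuniv

lemma cutoff_bound {n : ℕ} (χ : C(Eucl n, ℝ)) (hχc : HasCompactSupport χ)
    (g : Eucl n → ℝ) (hg : Continuous g) :
    ∃ C, 0 ≤ C ∧ ∀ x, |χ x * g x| ≤ C := by
  obtain ⟨C, hC⟩ := IsCompact.exists_bound_of_continuousOn hχc
    ((χ.continuous.mul hg).continuousOn)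
  refine ⟨max C 0, le_max_right _ _, fun x => ?_⟩
  by_cases hx : x ∈ tsupport ⇑χ
  · refine le_trans ?_ (le_max_left _ _)
    rw [abs_mul]
    simpa [Real.norm_eq_abs] using hC x hx
  · rw [image_eq_zero_of_notMem_tsupport hx, zero_mul, abs_zero]
    exact le_max_right _ _

lemma plan_null_compl {n : ℕ} (K : Set (Eucl n)) (hKm : MeasurableSet K)
    (μ0 μ1 : Measure (Eucl n)) (π : Measure (Eucl n × Eucl n))
    (hac0 : π.map Prod.fst ≪ μ0) (hac1 : π.map Prod.snd ≪ μ1)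
    (hμ0K : μ0 Kᶜ = 0) (hμ1K : μ1 Kᶜ = 0) : π (K ×ˢ K)ᶜ = 0 := by
  have h1 : π (Prod.fst ⁻¹' Kᶜ) = 0 := by
    rw [← Measure.map_apply measurable_fst hKm.compl]
    exact hac0 hμ0K
  have h2 : π (Prod.snd ⁻¹' Kᶜ) = 0 := by
    rw [← Measure.map_apply measurable_snd hKm.compl]
    exact hac1 hμ1K
  apply measure_mono_null _ (measure_union_null h1 h2)
  intro p hp
  simp only [Set.mem_compl_iff, Set.mem_prod, not_and_or] at hp
  rcases hp with hp | hp
  · exact Or.inl hp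
  · exact Or.inr hp

end

/-- narrow convergence of the barycentric momentum measures for `HK`. -/
theorem hk_barycentric_momentum_narrow_convergence
    {n : ℕ} (hn : 1 ≤ n) (κ : ℝ) (hκ : 0 < κ) (K : Set (Eucl n)) (hK : IsCompact K)
    (μ0N μ1N : ℕ → Measure (Eucl n))
    [∀ N, IsFiniteMeasure (μ0N N)] [∀ N, IsFiniteMeasure (μ1N N)]
    (hμ0NK : ∀ N, μ0N N Kᶜ = 0) (hμ1NK : ∀ N, μ1N N Kᶜ = 0)
    (μ0 μ1 : Measure (Eucl n)) [IsFiniteMeasure μ0] [IsFiniteMeasure μ1]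
    (hμ0conv : NarrowTendsto μ0N μ0) (hμ1conv : NarrowTendsto μ1N μ1)
    (hμ0ac : μ0 ≪ (volume : Measure (Eucl n)))
    -- the plans `π^N`
    (π : ℕ → Measure (Eucl n × Eucl n)) [∀ N, IsFiniteMeasure (π N)]
    (hπNK : ∀ N, π N (K ×ˢ K)ᶜ = 0)
    (hπNKL : ∀ N, KLdiv ((π N).map Prod.fst) (μ0N N) ≠ ⊤)
    (hπNcost : ∀ N, ∫⁻ p, cHK κ p.1 p.2 ∂(π N) ≠ ⊤)
    -- `π` is the unique minimizer of `E_κ(·|μ0,μ1)`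
    (πlim : Measure (Eucl n × Eucl n)) [IsFiniteMeasure πlim]
    (hπopt : HKfun κ πlim μ0 μ1 = HK2 κ μ0 μ1)
    (hπuniq : ∀ π' : Measure (Eucl n × Eucl n), IsFiniteMeasure π' →
      HKfun κ π' μ0 μ1 = HK2 κ μ0 μ1 → π' = πlim)
    -- `(1/cos(d/κ))·π^N` converges narrowly to `(1/cos(d/κ))·π`
    [∀ N, IsFiniteMeasure
      ((π N).withDensity fun p => ENNReal.ofReal (Real.cos (dist p.1 p.2 / κ))⁻¹)]
    (hconv : NarrowTendsto
      (fun N => (π N).withDensity fun p => ENNReal.ofReal (Real.cos (dist p.1 p.2 / κ))⁻¹)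
      (πlim.withDensity fun p => ENNReal.ofReal (Real.cos (dist p.1 p.2 / κ))⁻¹)) :
    (∀ φ : Eucl n → Eucl n, Continuous φ →
      Tendsto (fun N => ∫ x, ⟪φ x, barV κ (μ0N N) (π N) x⟫ ∂(μ0N N)) atTop
        (𝓝 (∫ x, ⟪φ x, barV κ μ0 πlim x⟫ ∂μ0))) ∧
    (∀ ψ : Eucl n → ℝ, Continuous ψ →
      Tendsto (fun N => ∫ x, ψ x * barA (μ0N N) (π N) x ∂(μ0N N)) atTop
        (𝓝 (∫ x, ψ x * barA μ0 πlim x ∂μ0))) := by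
  -- limit-side facts
  have hHKne : HKfun κ πlim μ0 μ1 ≠ ⊤ := by rw [hπopt]; exact HK2_ne_top κ μ0 μ1
  obtain ⟨hcostlim, hKL0lim, hKL1lim⟩ := HKfun_parts_ne_top hκ πlim μ0 μ1 hHKne
  have hac0lim : πlim.map Prod.fst ≪ μ0 := KLdiv_ne_top_ac hKL0lim
  have hac1lim : πlim.map Prod.snd ≪ μ1 := KLdiv_ne_top_ac hKL1lim
  have hμ0K : μ0 Kᶜ = 0 := narrow_limit_null_compl K hK μ0N hμ0NK μ0 hμ0conv
  have hμ1K : μ1 Kᶜ = 0 := narrow_limit_null_compl K hK μ1N hμ1NK μ1 hμ1conv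
  have hπlimK : πlim (K ×ˢ K)ᶜ = 0 :=
    plan_null_compl K hK.isClosed.measurableSet μ0 μ1 πlim hac0lim hac1lim hμ0K hμ1K
  have hcoslim : ∀ᵐ p ∂πlim, 0 < Real.cos (dist p.1 p.2 / κ) := ae_cos_pos hκ πlim hcostlim
  have hfinlim : ∫⁻ p, ENNReal.ofReal (Real.cos (dist p.1 p.2 / κ))⁻¹ ∂πlim ≠ ⊤ :=
    nu_lim_fin hκ π πlim hconv hcoslim
  -- per-N facts
  have hacN : ∀ N, (π N).map Prod.fst ≪ μ0N N := fun N => KLdiv_ne_top_ac (hπNKL N)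
  have hcosN : ∀ N, ∀ᵐ p ∂(π N), 0 < Real.cos (dist p.1 p.2 / κ) :=
    fun N => ae_cos_pos hκ (π N) (hπNcost N)
  have hfinN : ∀ N, ∫⁻ p, ENNReal.ofReal (Real.cos (dist p.1 p.2 / κ))⁻¹ ∂(π N) ≠ ⊤ := by
    intro N
    have h := measure_ne_top
      ((π N).withDensity fun p => ENNReal.ofReal (Real.cos (dist p.1 p.2 / κ))⁻¹) Set.univ
    rwa [withDensity_apply _ MeasurableSet.univ, setLIntegral_univ] at h
  -- cutoff function
  obtain ⟨χ0, hχ1, hχ0, hχc, hχ01⟩ := exists_continuous_one_zero_of_isCompact hK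
    isClosed_empty (by simp : Disjoint K (∅ : Set (Eucl n)))
  constructor
  · -- velocity part
    intro φ hφ
    obtain ⟨Mφ, hMφ⟩ := hK.exists_bound_of_continuousOn hφ.continuousOn
    obtain ⟨Cφ, hCφ0, hCφ⟩ := cutoff_bound χ0 hχc (fun x => ‖φ x‖) hφ.norm
    have hGcont : Continuous fun p : Eucl n × Eucl n =>
        (χ0 p.1 * χ0 p.2) * (κ * ⟪φ p.1, Vsin κ p⟫) := by
      apply Continuous.mul
      · exact (χ0.continuous.comp continuous_fst).mul (χ0.continuous.comp continuous_snd)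
      · exact continuous_const.mul ((hφ.comp continuous_fst).inner (continuous_Vsin κ hκ))
    have hGbound : ∀ p : Eucl n × Eucl n,
        ‖(χ0 p.1 * χ0 p.2) * (κ * ⟪φ p.1, Vsin κ p⟫)‖ ≤ |κ| * Cφ := by
      intro p
      rcases hχ01 p.1 with ⟨ha1, hb1⟩
      rcases hχ01 p.2 with ⟨ha2, hb2⟩
      have hi : |⟪φ p.1, Vsin κ p⟫| ≤ ‖φ p.1‖ := by
        refine (abs_real_inner_le_norm _ _).trans ?_
        calc ‖φ p.1‖ * ‖Vsin κ p‖ ≤ ‖φ p.1‖ * 1 :=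
              mul_le_mul_of_nonneg_left (norm_Vsin_le_one κ p) (norm_nonneg _)
          _ = ‖φ p.1‖ := mul_one _
      have hc1 : χ0 p.1 * ‖φ p.1‖ ≤ Cφ := by
        have := hCφ p.1
        rwa [abs_of_nonneg (by positivity)] at this
      rw [Real.norm_eq_abs, abs_mul, abs_mul, abs_mul, abs_of_nonneg ha1, abs_of_nonneg ha2]
      calc χ0 p.1 * χ0 p.2 * (|κ| * |⟪φ p.1, Vsin κ p⟫|)
          ≤ (χ0 p.1 * 1) * (|κ| * ‖φ p.1‖) := by
            apply mul_le_mul (mul_le_mul_of_nonneg_left hb2 ha1)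
              (mul_le_mul_of_nonneg_left hi (abs_nonneg κ)) (by positivity)
            simpa using ha1
        _ = |κ| * (χ0 p.1 * ‖φ p.1‖) := by ring
        _ ≤ |κ| * Cφ := mul_le_mul_of_nonneg_left hc1 (abs_nonneg κ)
    set G : BoundedContinuousFunction (Eucl n × Eucl n) ℝ :=
      BoundedContinuousFunction.ofNormedAddCommGroup _ hGcont (|κ| * Cφ) hGbound with hG
    have hrewN : ∀ N, ∫ x, ⟪φ x, barV κ (μ0N N) (π N) x⟫ ∂(μ0N N)
        = ∫ p, G p ∂((π N).withDensity fun p =>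
            ENNReal.ofReal (Real.cos (dist p.1 p.2 / κ))⁻¹) := fun N =>
      mainV hκ K (μ0N N) (π N) (hacN N) (hπNK N) (hcosN N) (hfinN N) φ hφ hMφ χ0 hχ1
    have hrewlim : ∫ x, ⟪φ x, barV κ μ0 πlim x⟫ ∂μ0
        = ∫ p, G p ∂(πlim.withDensity fun p =>
            ENNReal.ofReal (Real.cos (dist p.1 p.2 / κ))⁻¹) :=
      mainV hκ K μ0 πlim hac0lim hπlimK hcoslim hfinlim φ hφ hMφ χ0 hχ1
    rw [hrewlim]
    exact (hconv G).congr (fun N => (hrewN N).symm)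
  · -- growth part
    intro ψ hψ
    obtain ⟨Mψ, hMψ⟩ := hK.exists_bound_of_continuousOn hψ.continuousOn
    obtain ⟨Cψ, hCψ0, hCψ⟩ := cutoff_bound χ0 hχc ψ hψ
    have hHcont : Continuous fun p : Eucl n × Eucl n =>
        (χ0 p.1 * χ0 p.2) * (Real.cos (dist p.1 p.2 / κ) * ψ p.1) := by
      apply Continuous.mul
      · exact (χ0.continuous.comp continuous_fst).mul (χ0.continuous.comp continuous_snd)
      · exact (by fun_prop : Continuous fun p : Eucl n × Eucl n =>
          Real.cos (dist p.1 p.2 / κ)).mul (hψ.comp continuous_fst)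
    have hHbound : ∀ p : Eucl n × Eucl n,
        ‖(χ0 p.1 * χ0 p.2) * (Real.cos (dist p.1 p.2 / κ) * ψ p.1)‖ ≤ Cψ := by
      intro p
      rcases hχ01 p.1 with ⟨ha1, hb1⟩
      rcases hχ01 p.2 with ⟨ha2, hb2⟩
      have hc1 : |χ0 p.1 * ψ p.1| ≤ Cψ := hCψ p.1
      rw [Real.norm_eq_abs]
      have e : χ0 p.1 * χ0 p.2 * (Real.cos (dist p.1 p.2 / κ) * ψ p.1)
          = (χ0 p.1 * ψ p.1) * (χ0 p.2 * Real.cos (dist p.1 p.2 / κ)) := by ring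
      rw [e, abs_mul, abs_mul (χ0 p.2) (Real.cos (dist p.1 p.2 / κ))]
      calc |χ0 p.1 * ψ p.1| * (|χ0 p.2| * |Real.cos (dist p.1 p.2 / κ)|)
          ≤ Cψ * (1 * 1) := by
            apply mul_le_mul hc1
            · apply mul_le_mul (by rwa [abs_of_nonneg ha2]) (Real.abs_cos_le_one _)
                (abs_nonneg _) (by norm_num)
            · positivity
            · exact hCψ0
        _ = Cψ := by ring
    set H : BoundedContinuousFunction (Eucl n × Eucl n) ℝ :=
      BoundedContinuousFunction.ofNormedAddCommGroup _ hHcont Cψ hHbound with hH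
    have hχψbound : ∀ x, ‖χ0 x * ψ x‖ ≤ Cψ := fun x => by
      rw [Real.norm_eq_abs]; exact hCψ x
    set h2 : BoundedContinuousFunction (Eucl n) ℝ :=
      BoundedContinuousFunction.ofNormedAddCommGroup _ (χ0.continuous.mul hψ) Cψ hχψbound
      with hh2
    have hrewN : ∀ N, ∫ x, ψ x * barA (μ0N N) (π N) x ∂(μ0N N)
        = 2 * ∫ p, H p ∂((π N).withDensity fun p =>
            ENNReal.ofReal (Real.cos (dist p.1 p.2 / κ))⁻¹) - 2 * ∫ x, h2 x ∂(μ0N N) := fun N =>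
      mainA hκ K (μ0N N) (hμ0NK N) (π N) (hacN N) (hπNK N) (hcosN N) ψ hψ hMψ χ0 hχ1
    have hrewlim : ∫ x, ψ x * barA μ0 πlim x ∂μ0
        = 2 * ∫ p, H p ∂(πlim.withDensity fun p =>
            ENNReal.ofReal (Real.cos (dist p.1 p.2 / κ))⁻¹) - 2 * ∫ x, h2 x ∂μ0 :=
      mainA hκ K μ0 hμ0K πlim hac0lim hπlimK hcoslim ψ hψ hMψ χ0 hχ1
    rw [hrewlim]
    exact (((hconv H).const_mul 2).sub ((hμ0conv h2).const_mul 2)).congr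
      (fun N => (hrewN N).symm)
end

section
/- Let n ≥ 1, κ > 0, let μ0, μ1 be finite nonnegative compactly supported Borel measures on ℝ^n, and let γ0, γ1 be finite nonnegative Borel measures on ℝ^n × ℝ^n with proj_{0#} γ0 = μ0 and proj_{1#} γ1 = μ1 satisfying κ²( γ0(ℝ^n×ℝ^n) + γ1(ℝ^n×ℝ^n) − 2 ∫ Cos(|x−y|/κ) d√(γ0γ1)(x,y) ) = HK_κ²(μ0,μ1), where Cos(s) = cos(min(|s|, π/2)). Then the measure π := Cos(|x−y|/κ)·√(γ0γ1) minimizes the soft-marginal formulation: E_κ(π|μ0,μ1) = HK_κ²(μ0,μ1). -/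
open MeasureTheory ENNReal Filter Topology RealInnerProductSpace
open scoped Classical

section AuxHK

open ProbabilityTheory

lemma scalar_ineq {t s : ℝ} (ht : 0 ≤ t) (hs : 0 < s) :
    t * Real.log s - s + 1 ≤ t * Real.log t - t + 1 := by
  rcases eq_or_lt_of_le ht with h | h
  · simp only [← h, zero_mul, zero_sub]
    linarith
  · have h1 : Real.log (s / t) ≤ s / t - 1 := Real.log_le_sub_one_of_pos (div_pos hs h)
    have h2 : Real.log (s / t) = Real.log s - Real.log t := Real.log_div hs.ne' h.ne'
    rw [h2] at h1
    have := mul_le_mul_of_nonneg_left h1 h.le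
    rw [mul_sub] at this
    have h3 : t * (s / t) = s := by field_simp
    nlinarith


lemma F_nonneg {t : ℝ} (ht : 0 ≤ t) : 0 ≤ t * Real.log t - t + 1 := by
  have := scalar_ineq ht one_pos
  simpa using this


lemma ofReal_integral_le {α : Type*} [MeasurableSpace α] {μ : Measure α} {f : α → ℝ}
    (hf : Integrable f μ) :
    ENNReal.ofReal (∫ x, f x ∂μ) ≤ ∫⁻ x, ENNReal.ofReal (f x) ∂μ := by
  have h1 : ∫ x, f x ∂μ ≤ ∫ x, max (f x) 0 ∂μ :=
    integral_mono hf hf.pos_part (fun x => le_max_left _ _)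
  calc ENNReal.ofReal (∫ x, f x ∂μ) ≤ ENNReal.ofReal (∫ x, max (f x) 0 ∂μ) :=
        ENNReal.ofReal_le_ofReal h1
    _ = ∫⁻ x, ENNReal.ofReal (max (f x) 0) ∂μ :=
        ofReal_integral_eq_lintegral_ofReal hf.pos_part
          (Filter.Eventually.of_forall fun x => le_max_right _ _)
    _ = ∫⁻ x, ENNReal.ofReal (f x) ∂μ := by
        refine lintegral_congr fun x => ?_
        rcases le_total (f x) 0 with h | h
        · simp [max_eq_right h, ENNReal.ofReal_eq_zero.2 h]
        · rw [max_eq_left h]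


lemma klDiv_fst_le {α β : Type*} [MeasurableSpace α] [MeasurableSpace β]
    [StandardBorelSpace β] [Nonempty β]
    (γ : Measure (α × β)) [IsFiniteMeasure γ] (u : α × β → ℝ≥0∞) (hu : Measurable u)
    (hfin : ∫⁻ p, u p ∂γ ≠ ∞) :
    KLdiv ((γ.withDensity u).map Prod.fst) (γ.map Prod.fst)
      ≤ ∫⁻ p, ENNReal.ofReal ((u p).toReal * Real.log (u p).toReal
          - (u p).toReal + 1) ∂γ := by
  set K := γ.condKernel with hK
  have hdis : Measure.compProd γ.fst K = γ := γ.disintegrate K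
  set r : α → ℝ≥0∞ := fun x => ∫⁻ y, u (x, y) ∂(K x) with hr
  have hrm : Measurable r := by
    apply Measurable.lintegral_kernel_prod_right (f := fun x y => u (x, y))
    exact hu
  have hγfst : γ.map Prod.fst = γ.fst := rfl
  -- the first marginal of the withDensity measure
  have hmap : (γ.withDensity u).map Prod.fst = γ.fst.withDensity r := by
    ext s hs
    rw [Measure.map_apply measurable_fst hs, withDensity_apply _ (measurable_fst hs),
      withDensity_apply _ hs]
    have hpre : Prod.fst ⁻¹' s = s ×ˢ (Set.univ : Set β) := by
      ext p; simp
    rw [hpre]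
    conv_lhs => rw [← hdis]
    rw [Measure.setLIntegral_compProd hu hs MeasurableSet.univ]
    simp only [Measure.restrict_univ]
    rfl
  have hrfin : ∫⁻ x, r x ∂γ.fst ≠ ∞ := by
    rw [hr]
    have : ∫⁻ x, ∫⁻ y, u (x, y) ∂(K x) ∂γ.fst = ∫⁻ p, u p ∂γ := by
      conv_rhs => rw [← hdis]
      rw [Measure.lintegral_compProd hu]
    rw [this]; exact hfin
  have hrae : ∀ᵐ x ∂γ.fst, r x < ∞ := ae_lt_top hrm hrfin
  -- rewrite the RHS via disintegration
  have hFm : Measurable fun t : ℝ≥0∞ =>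
      ENNReal.ofReal (t.toReal * Real.log t.toReal - t.toReal + 1) := by
    apply ENNReal.measurable_ofReal.comp
    exact ((ENNReal.measurable_toReal.mul
      (Real.measurable_log.comp ENNReal.measurable_toReal)).sub
      ENNReal.measurable_toReal).add measurable_const
  have hRHS : ∫⁻ p, ENNReal.ofReal ((u p).toReal * Real.log (u p).toReal
      - (u p).toReal + 1) ∂γ
      = ∫⁻ x, ∫⁻ y, ENNReal.ofReal ((u (x, y)).toReal * Real.log (u (x, y)).toReal
          - (u (x, y)).toReal + 1) ∂(K x) ∂γ.fst := by
    conv_lhs => rw [← hdis]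
    rw [Measure.lintegral_compProd
      (f := fun p => ENNReal.ofReal ((u p).toReal * Real.log (u p).toReal - (u p).toReal + 1))
      (by exact hFm.comp hu)]
  rw [hγfst, hmap, hRHS, KLdiv, if_pos (withDensity_absolutelyContinuous _ _)]
  have hrnd : (γ.fst.withDensity r).rnDeriv γ.fst =ᵐ[γ.fst] r :=
    Measure.rnDeriv_withDensity γ.fst hrm
  calc ∫⁻ x, ENNReal.ofReal
        (((γ.fst.withDensity r).rnDeriv γ.fst x).toReal
          * Real.log ((γ.fst.withDensity r).rnDeriv γ.fst x).toReal
          - ((γ.fst.withDensity r).rnDeriv γ.fst x).toReal + 1) ∂γ.fst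
      = ∫⁻ x, ENNReal.ofReal ((r x).toReal * Real.log (r x).toReal
          - (r x).toReal + 1) ∂γ.fst := by
        refine lintegral_congr_ae ?_
        filter_upwards [hrnd] with x hx
        rw [hx]
    _ ≤ ∫⁻ x, ∫⁻ y, ENNReal.ofReal ((u (x, y)).toReal * Real.log (u (x, y)).toReal
          - (u (x, y)).toReal + 1) ∂(K x) ∂γ.fst := by
        refine lintegral_mono_ae ?_
        filter_upwards [hrae] with x hx
        -- key pointwise (in x) inequality
        have humx : Measurable fun y => u (x, y) := hu.comp measurable_prodMk_left
        rcases eq_or_ne (r x) 0 with hx0 | hx0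
        · -- u (x, ·) = 0 a.e.
          have hu0 : ∀ᵐ y ∂(K x), u (x, y) = 0 := by
            have := (lintegral_eq_zero_iff humx).1 hx0
            filter_upwards [this] with y hy using hy
          have : ∫⁻ y, ENNReal.ofReal ((u (x, y)).toReal * Real.log (u (x, y)).toReal
              - (u (x, y)).toReal + 1) ∂(K x) = ∫⁻ _, ENNReal.ofReal 1 ∂(K x) := by
            refine lintegral_congr_ae ?_
            filter_upwards [hu0] with y hy
            simp [hy]
          rw [this, hx0, lintegral_const]
          simp [measure_univ]
        · -- 0 < r x < ∞
          set s := (r x).toReal with hsdef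
          have hs : 0 < s := ENNReal.toReal_pos hx0 hx.ne
          have huae : ∀ᵐ y ∂(K x), u (x, y) < ∞ :=
            ae_lt_top humx hx.ne
          have hInt : Integrable (fun y => (u (x, y)).toReal) (K x) :=
            integrable_toReal_of_lintegral_ne_top humx.aemeasurable hx.ne
          have hIntEq : ∫ y, (u (x, y)).toReal ∂(K x) = s := by
            rw [integral_toReal humx.aemeasurable huae]
          have hgInt : Integrable
              (fun y => (u (x, y)).toReal * Real.log s - s + 1) (K x) :=
            ((hInt.mul_const (Real.log s)).add (integrable_const (1 - s))).congr
              (Filter.Eventually.of_forall fun y => by simp only [Pi.add_apply]; ring)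
          have hgEq : ∫ y, ((u (x, y)).toReal * Real.log s - s + 1) ∂(K x)
              = s * Real.log s - s + 1 := by
            have hfe : (fun y => (u (x, y)).toReal * Real.log s - s + 1)
                = fun y => (u (x, y)).toReal * Real.log s + (1 - s) := by
              funext y; ring
            rw [hfe, integral_add (hInt.mul_const _) (integrable_const _),
              integral_mul_const, hIntEq, integral_const]
            simp [measure_univ]
            try ring
          calc ENNReal.ofReal (s * Real.log s - s + 1)
              = ENNReal.ofReal (∫ y, ((u (x, y)).toReal * Real.log s - s + 1) ∂(K x)) := by
                rw [hgEq]
            _ ≤ ∫⁻ y, ENNReal.ofReal ((u (x, y)).toReal * Real.log s - s + 1) ∂(K x) :=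
                ofReal_integral_le hgInt
            _ ≤ _ := by
                refine lintegral_mono fun y => ?_
                exact ENNReal.ofReal_le_ofReal (scalar_ineq ENNReal.toReal_nonneg hs)


lemma withDensity_map_equiv {α β : Type*} [MeasurableSpace α] [MeasurableSpace β]
    (e : α ≃ᵐ β) (μ : Measure α) (f : β → ℝ≥0∞) (hf : Measurable f) :
    (μ.map e).withDensity f = (μ.withDensity (f ∘ e)).map e := by
  ext s hs
  rw [withDensity_apply _ hs, Measure.map_apply e.measurable hs,
    withDensity_apply _ (e.measurable hs),
    setLIntegral_map hs hf e.measurable]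
  rfl

lemma klDiv_snd_le {α β : Type*} [MeasurableSpace α] [MeasurableSpace β]
    [StandardBorelSpace α] [Nonempty α]
    (γ : Measure (α × β)) [IsFiniteMeasure γ] (u : α × β → ℝ≥0∞) (hu : Measurable u)
    (hfin : ∫⁻ p, u p ∂γ ≠ ∞) :
    KLdiv ((γ.withDensity u).map Prod.snd) (γ.map Prod.snd)
      ≤ ∫⁻ p, ENNReal.ofReal ((u p).toReal * Real.log (u p).toReal
          - (u p).toReal + 1) ∂γ := by
  set e : α × β ≃ᵐ β × α := MeasurableEquiv.prodComm
  have hmap : ∀ (ρ : Measure (α × β)), ρ.map Prod.snd = (ρ.map e).map Prod.fst := by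
    intro ρ
    rw [Measure.map_map measurable_fst e.measurable]
    rfl
  have hγ' : IsFiniteMeasure (γ.map e) := by
    constructor
    rw [Measure.map_apply e.measurable MeasurableSet.univ]
    exact measure_lt_top γ _
  have hwd : (γ.map e).withDensity (u ∘ e.symm) = (γ.withDensity u).map e := by
    have he : (u ∘ e.symm) ∘ e = u := by funext p; simp
    rw [withDensity_map_equiv e γ (u ∘ e.symm) (hu.comp e.symm.measurable), he]
  have hlint : ∫⁻ p, ENNReal.ofReal (((u ∘ e.symm) p).toReal
      * Real.log ((u ∘ e.symm) p).toReal - ((u ∘ e.symm) p).toReal + 1) ∂(γ.map e)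
      = ∫⁻ p, ENNReal.ofReal ((u p).toReal * Real.log (u p).toReal
          - (u p).toReal + 1) ∂γ := by
    rw [lintegral_map (by
      exact (ENNReal.measurable_ofReal.comp (((ENNReal.measurable_toReal.mul
        (Real.measurable_log.comp ENNReal.measurable_toReal)).sub
        ENNReal.measurable_toReal).add measurable_const)).comp
        (hu.comp e.symm.measurable)) e.measurable]
    refine lintegral_congr fun p => ?_
    simp
  have hfin' : ∫⁻ p, (u ∘ e.symm) p ∂(γ.map e) ≠ ∞ := by
    rw [lintegral_map (hu.comp e.symm.measurable) e.measurable]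
    simpa using hfin
  have := @klDiv_fst_le β α _ _ _ _ (γ.map e) hγ' (u ∘ e.symm)
    (hu.comp e.symm.measurable) hfin'
  rw [hwd, hlint] at this
  rw [hmap (γ.withDensity u), hmap γ]
  exact this


lemma pointwise_key (κ d : ℝ) (hκ : 0 < κ) (hd : 0 ≤ d) (a b : ℝ≥0∞)
    (ha : a ≠ ∞) (hb : b ≠ ∞) :
    (ENNReal.ofReal (truncCos (d / κ)) * (a * b) ^ (1/2 : ℝ)) *
      (if d < κ * Real.pi / 2 then
        ENNReal.ofReal (-2 * κ ^ 2 * Real.log (Real.cos (d / κ))) else ⊤)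
    + ENNReal.ofReal (κ ^ 2) *
      (a * ENNReal.ofReal
          ((ENNReal.ofReal (truncCos (d / κ)) * (b / a) ^ (1/2 : ℝ)).toReal
            * Real.log (ENNReal.ofReal (truncCos (d / κ)) * (b / a) ^ (1/2 : ℝ)).toReal
            - (ENNReal.ofReal (truncCos (d / κ)) * (b / a) ^ (1/2 : ℝ)).toReal + 1)
        + b * ENNReal.ofReal
          ((ENNReal.ofReal (truncCos (d / κ)) * (a / b) ^ (1/2 : ℝ)).toReal
            * Real.log (ENNReal.ofReal (truncCos (d / κ)) * (a / b) ^ (1/2 : ℝ)).toReal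
            - (ENNReal.ofReal (truncCos (d / κ)) * (a / b) ^ (1/2 : ℝ)).toReal + 1)
        + 2 * (ENNReal.ofReal (truncCos (d / κ)) * (a * b) ^ (1/2 : ℝ)))
    = ENNReal.ofReal (κ ^ 2) * (a + b) := by
  rcases eq_or_ne a 0 with ha0 | ha0
  · subst ha0
    simp [ENNReal.zero_rpow_of_pos (by norm_num : (0:ℝ) < 1/2), ENNReal.zero_div,
      Real.log_zero]
  rcases eq_or_ne b 0 with hb0 | hb0
  · subst hb0
    simp [ENNReal.zero_rpow_of_pos (by norm_num : (0:ℝ) < 1/2), ENNReal.zero_div,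
      Real.log_zero]
  by_cases hlt : d < κ * Real.pi / 2
  swap
  · -- `Cos = 0` here
    have hge : Real.pi / 2 ≤ d / κ := by
      rw [le_div_iff₀ hκ]
      push_neg at hlt
      linarith
    have hC : truncCos (d / κ) = 0 := by
      rw [truncCos, abs_of_nonneg (div_nonneg hd hκ.le), min_eq_right hge, Real.cos_pi_div_two]
    rw [if_neg hlt, hC]
    simp [Real.log_zero]
  -- main case
  rw [if_pos hlt]
  have hdκ : d / κ < Real.pi / 2 := by
    rw [div_lt_iff₀ hκ]; linarith
  have hdκ0 : 0 ≤ d / κ := div_nonneg hd hκ.le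
  have hC : truncCos (d / κ) = Real.cos (d / κ) := by
    rw [truncCos, abs_of_nonneg hdκ0, min_eq_left hdκ.le]
  set c0 := Real.cos (d / κ) with hc0def
  have hc0 : 0 < c0 := Real.cos_pos_of_mem_Ioo ⟨by have := Real.pi_pos; linarith, hdκ⟩
  have hc1 : c0 ≤ 1 := Real.cos_le_one _
  set A := a.toReal with hA
  set B := b.toReal with hB
  have hApos : 0 < A := ENNReal.toReal_pos ha0 ha
  have hBpos : 0 < B := ENNReal.toReal_pos hb0 hb
  have haR : a = ENNReal.ofReal A := (ENNReal.ofReal_toReal ha).symm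
  have hbR : b = ENNReal.ofReal B := (ENNReal.ofReal_toReal hb).symm
  -- rewrite all ENNReal quantities as `ofReal` of real ones
  have hsq : ∀ x y : ℝ≥0∞, (x * y) ^ (1/2:ℝ) = (x*y) ^ (1/2:ℝ) := fun _ _ => rfl
  have hab : (a * b) ^ (1/2:ℝ) = ENNReal.ofReal (Real.sqrt (A * B)) := by
    rw [haR, hbR, ← ENNReal.ofReal_mul hApos.le,
      ENNReal.ofReal_rpow_of_nonneg (by positivity) (by norm_num),
      Real.sqrt_eq_rpow]
  have hba : (b / a) ^ (1/2:ℝ) = ENNReal.ofReal (Real.sqrt (B / A)) := by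
    rw [haR, hbR, ← ENNReal.ofReal_div_of_pos hApos,
      ENNReal.ofReal_rpow_of_nonneg (by positivity) (by norm_num),
      Real.sqrt_eq_rpow]
  have hab' : (a / b) ^ (1/2:ℝ) = ENNReal.ofReal (Real.sqrt (A / B)) := by
    rw [haR, hbR, ← ENNReal.ofReal_div_of_pos hBpos,
      ENNReal.ofReal_rpow_of_nonneg (by positivity) (by norm_num),
      Real.sqrt_eq_rpow]
  set s := Real.sqrt (A * B) with hsdef
  set t0 := c0 * Real.sqrt (B / A) with ht0def
  set t1 := c0 * Real.sqrt (A / B) with ht1def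
  have hspos : 0 < s := Real.sqrt_pos.2 (by positivity)
  have ht0pos : 0 < t0 := mul_pos hc0 (Real.sqrt_pos.2 (by positivity))
  have ht1pos : 0 < t1 := mul_pos hc0 (Real.sqrt_pos.2 (by positivity))
  have hu0 : ENNReal.ofReal (truncCos (d / κ)) * (b / a) ^ (1/2:ℝ) = ENNReal.ofReal t0 := by
    rw [hC, hba, ← ENNReal.ofReal_mul hc0.le]
  have hu1 : ENNReal.ofReal (truncCos (d / κ)) * (a / b) ^ (1/2:ℝ) = ENNReal.ofReal t1 := by
    rw [hC, hab', ← ENNReal.ofReal_mul hc0.le]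
  have hD : ENNReal.ofReal (truncCos (d / κ)) * (a * b) ^ (1/2:ℝ)
      = ENNReal.ofReal (c0 * s) := by
    rw [hC, hab, ← ENNReal.ofReal_mul hc0.le]
  have hlog : Real.log c0 ≤ 0 := Real.log_nonpos hc0.le hc1
  rw [hu0, hu1, hD, haR, hbR,
    ENNReal.toReal_ofReal ht0pos.le, ENNReal.toReal_ofReal ht1pos.le]
  have hκ2 : (0:ℝ) ≤ κ ^ 2 := by positivity
  have hF0 : 0 ≤ A * (t0 * Real.log t0 - t0 + 1) := mul_nonneg hApos.le (F_nonneg ht0pos.le)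
  have hF1 : 0 ≤ B * (t1 * Real.log t1 - t1 + 1) := mul_nonneg hBpos.le (F_nonneg ht1pos.le)
  have hX1 : 0 ≤ c0 * s * (-2 * κ ^ 2 * Real.log c0) := by
    apply mul_nonneg (by positivity)
    nlinarith [hlog]
  rw [← ENNReal.ofReal_mul (by positivity : (0:ℝ) ≤ c0 * s),
    ← ENNReal.ofReal_mul hApos.le, ← ENNReal.ofReal_mul hBpos.le,
    show (2:ℝ≥0∞) = ENNReal.ofReal 2 by norm_num,
    ← ENNReal.ofReal_mul (by norm_num : (0:ℝ) ≤ 2),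
    ← ENNReal.ofReal_add hF0 hF1,
    ← ENNReal.ofReal_add (add_nonneg hF0 hF1) (by positivity : (0:ℝ) ≤ 2 * (c0 * s)),
    ← ENNReal.ofReal_mul hκ2,
    ← ENNReal.ofReal_add hX1 (mul_nonneg hκ2 (add_nonneg (add_nonneg hF0 hF1) (by positivity))),
    ← ENNReal.ofReal_add hApos.le hBpos.le,
    ← ENNReal.ofReal_mul hκ2]
  congr 1
  -- now a purely real identity
  have h1 : A * t0 = c0 * s := by
    rw [ht0def, hsdef]
    have e1 : A * Real.sqrt (B / A) = Real.sqrt (A * B) := by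
      have e2 : A ^ 2 * (B / A) = A * B := by field_simp
      calc A * Real.sqrt (B / A) = Real.sqrt (A ^ 2) * Real.sqrt (B / A) := by
            rw [Real.sqrt_sq hApos.le]
        _ = Real.sqrt (A ^ 2 * (B / A)) := (Real.sqrt_mul (sq_nonneg A) _).symm
        _ = Real.sqrt (A * B) := by rw [e2]
    linear_combination c0 * e1
  have h2 : B * t1 = c0 * s := by
    rw [ht1def, hsdef]
    have e1 : B * Real.sqrt (A / B) = Real.sqrt (A * B) := by
      have e2 : B ^ 2 * (A / B) = A * B := by field_simp
      calc B * Real.sqrt (A / B) = Real.sqrt (B ^ 2) * Real.sqrt (A / B) := by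
            rw [Real.sqrt_sq hBpos.le]
        _ = Real.sqrt (B ^ 2 * (A / B)) := (Real.sqrt_mul (sq_nonneg B) _).symm
        _ = Real.sqrt (A * B) := by rw [e2]
    linear_combination c0 * e1
  have h3 : Real.log t0 = Real.log c0 + (Real.log B - Real.log A) / 2 := by
    rw [ht0def, Real.log_mul hc0.ne' (Real.sqrt_pos.2 (by positivity)).ne',
      Real.log_sqrt (by positivity), Real.log_div hBpos.ne' hApos.ne']
  have h4 : Real.log t1 = Real.log c0 + (Real.log A - Real.log B) / 2 := by
    rw [ht1def, Real.log_mul hc0.ne' (Real.sqrt_pos.2 (by positivity)).ne',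
      Real.log_sqrt (by positivity), Real.log_div hApos.ne' hBpos.ne']
  rw [h3, h4]
  linear_combination (κ^2 * (Real.log c0 + (Real.log B - Real.log A)/2 - 1)) * h1
    + (κ^2 * (Real.log c0 + (Real.log A - Real.log B)/2 - 1)) * h2


end AuxHK

/-- an optimal soft-marginal plan built from optimal semi-couplings. -/
theorem hk_optimal_plan_from_semicouplings
    {n : ℕ} (hn : 1 ≤ n) (κ : ℝ) (hκ : 0 < κ)
    (μ0 μ1 : Measure (Eucl n)) [IsFiniteMeasure μ0] [IsFiniteMeasure μ1]
    (hμ0K : ∃ K : Set (Eucl n), IsCompact K ∧ μ0 Kᶜ = 0)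
    (hμ1K : ∃ K : Set (Eucl n), IsCompact K ∧ μ1 Kᶜ = 0)
    -- `γ0`, `γ1` are optimal semi-couplings
    (γ0 γ1 : Measure (Eucl n × Eucl n)) [IsFiniteMeasure γ0] [IsFiniteMeasure γ1]
    (hγ0marg : γ0.map Prod.fst = μ0) (hγ1marg : γ1.map Prod.snd = μ1)
    (hγopt : ENNReal.ofReal (κ ^ 2) * (γ0 Set.univ + γ1 Set.univ)
      = HK2 κ μ0 μ1 + ENNReal.ofReal (κ ^ 2)
        * (2 * ∫⁻ p, ENNReal.ofReal (truncCos (dist p.1 p.2 / κ)) ∂(sqrtMeasure γ0 γ1)))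
    -- the plan `π := Cos(d/κ)·√(γ0 γ1)`
    (π : Measure (Eucl n × Eucl n))
    (hπ : π = (sqrtMeasure γ0 γ1).withDensity
      (fun p => ENNReal.ofReal (truncCos (dist p.1 p.2 / κ)))) :
    HKfun κ π μ0 μ1 = HK2 κ μ0 μ1 := by
  have hκ2 : (0:ℝ) ≤ κ ^ 2 := by positivity
  set τ : Measure (Eucl n × Eucl n) := γ0 + γ1 with hτdef
  have hac0 : γ0 ≪ τ := by
    refine Measure.AbsolutelyContinuous.mk fun s hs h0 => ?_
    rw [hτdef, Measure.add_apply, add_eq_zero] at h0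
    exact h0.1
  have hac1 : γ1 ≪ τ := by
    refine Measure.AbsolutelyContinuous.mk fun s hs h0 => ?_
    rw [hτdef, Measure.add_apply, add_eq_zero] at h0
    exact h0.2
  haveI hLD0 : γ0.HaveLebesgueDecomposition τ :=
    Measure.haveLebesgueDecomposition_of_sigmaFinite γ0 (γ0 + γ1)
  haveI hLD1 : γ1.HaveLebesgueDecomposition τ :=
    Measure.haveLebesgueDecomposition_of_sigmaFinite γ1 (γ0 + γ1)
  set f0 : Eucl n × Eucl n → ℝ≥0∞ := γ0.rnDeriv τ with hf0def
  set f1 : Eucl n × Eucl n → ℝ≥0∞ := γ1.rnDeriv τ with hf1def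
  have hf0m : Measurable f0 := Measure.measurable_rnDeriv _ _
  have hf1m : Measurable f1 := Measure.measurable_rnDeriv _ _
  have hγ0d : τ.withDensity f0 = γ0 := Measure.withDensity_rnDeriv_eq _ _ hac0
  have hγ1d : τ.withDensity f1 = γ1 := Measure.withDensity_rnDeriv_eq _ _ hac1
  have hf0ae : ∀ᵐ p ∂τ, f0 p ≠ ∞ := Measure.rnDeriv_ne_top _ _
  have hf1ae : ∀ᵐ p ∂τ, f1 p ≠ ∞ := Measure.rnDeriv_ne_top _ _
  set Cf : Eucl n × Eucl n → ℝ≥0∞ :=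
    fun p => ENNReal.ofReal (truncCos (dist p.1 p.2 / κ)) with hCfdef
  have hCfm : Measurable Cf := by
    apply Measurable.ennreal_ofReal
    apply Continuous.measurable
    apply Real.continuous_cos.comp
    exact (continuous_abs.comp ((continuous_fst.dist continuous_snd).div_const κ)).min
      continuous_const
  have hCf1 : ∀ p, Cf p ≤ 1 := fun p =>
    ENNReal.ofReal_le_one.2 (Real.cos_le_one _)
  set g : Eucl n × Eucl n → ℝ≥0∞ := fun p => (f0 p * f1 p) ^ (1/2 : ℝ) with hgdef
  have hgm : Measurable g := (hf0m.mul hf1m).pow_const _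
  have hσ : sqrtMeasure γ0 γ1 = τ.withDensity g := rfl
  have hπτ : π = τ.withDensity (fun p => g p * Cf p) := by
    rw [hπ, hσ]
    exact (withDensity_mul τ hgm hCfm).symm
  -- finiteness
  have hgle : ∀ p, g p ≤ f0 p + f1 p := by
    intro p
    have h1 : f0 p * f1 p ≤ (f0 p + f1 p) * (f0 p + f1 p) :=
      mul_le_mul' le_self_add le_add_self
    calc g p = (f0 p * f1 p) ^ (1/2 : ℝ) := rfl
      _ ≤ ((f0 p + f1 p) * (f0 p + f1 p)) ^ (1/2 : ℝ) :=
          ENNReal.rpow_le_rpow h1 (by norm_num)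
      _ = f0 p + f1 p := by
          rw [← pow_two, ← ENNReal.rpow_natCast (f0 p + f1 p) 2, ← ENNReal.rpow_mul]
          norm_num
  have hgfin : ∫⁻ p, g p ∂τ ≠ ∞ := by
    refine ne_top_of_le_ne_top ?_ (lintegral_mono hgle)
    rw [lintegral_add_left hf0m, Measure.lintegral_rnDeriv hac0, Measure.lintegral_rnDeriv hac1]
    exact ENNReal.add_ne_top.2 ⟨measure_ne_top _ _, measure_ne_top _ _⟩
  have hgCle : ∀ p, g p * Cf p ≤ g p := fun p => by
    calc g p * Cf p ≤ g p * 1 := mul_le_mul_right (hCf1 p) _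
      _ = g p := mul_one _
  have hπfin : π Set.univ ≠ ∞ := by
    rw [hπτ, withDensity_apply _ MeasurableSet.univ, Measure.restrict_univ]
    exact ne_top_of_le_ne_top hgfin (lintegral_mono hgCle)
  haveI hπF : IsFiniteMeasure π := ⟨lt_top_iff_ne_top.2 hπfin⟩
  -- the `∫ Cos d√(γ0γ1)` term
  have hI : (∫⁻ p, ENNReal.ofReal (truncCos (dist p.1 p.2 / κ)) ∂(sqrtMeasure γ0 γ1))
      = ∫⁻ p, g p * Cf p ∂τ := by
    rw [hσ, lintegral_withDensity_eq_lintegral_mul τ hgm hCfm]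
    exact lintegral_congr fun p => rfl
  have hIfin : (∫⁻ p, g p * Cf p ∂τ) ≠ ∞ :=
    ne_top_of_le_ne_top hgfin (lintegral_mono hgCle)
  -- the densities of π with respect to γ0 and γ1
  set u0 : Eucl n × Eucl n → ℝ≥0∞ := fun p => Cf p * (f1 p / f0 p) ^ (1/2 : ℝ) with hu0def
  set u1 : Eucl n × Eucl n → ℝ≥0∞ := fun p => Cf p * (f0 p / f1 p) ^ (1/2 : ℝ) with hu1def
  have hu0m : Measurable u0 := hCfm.mul ((hf1m.div hf0m).pow_const _)
  have hu1m : Measurable u1 := hCfm.mul ((hf0m.div hf1m).pow_const _)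
  have key : ∀ (x y : ℝ≥0∞), x ≠ ∞ → x * (y / x) ^ (1/2 : ℝ) = (x * y) ^ (1/2 : ℝ) := by
    intro x y hx
    rcases eq_or_ne x 0 with h0 | h0
    · subst h0
      simp [ENNReal.zero_rpow_of_pos (by norm_num : (0:ℝ) < 1/2), ENNReal.zero_div]
    · have h1 : x * x * (y / x) = x * y := by
        calc x * x * (y / x) = x * (x * (y / x)) := by ring
          _ = x * y := by rw [ENNReal.mul_div_cancel h0 hx]
      calc x * (y / x) ^ (1/2 : ℝ)
          = (x * x) ^ (1/2 : ℝ) * (y / x) ^ (1/2 : ℝ) := by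
            congr 1
            rw [← pow_two, ← ENNReal.rpow_natCast x 2, ← ENNReal.rpow_mul]
            norm_num
        _ = (x * x * (y / x)) ^ (1/2 : ℝ) := (ENNReal.mul_rpow_of_nonneg _ _ (by norm_num)).symm
        _ = (x * y) ^ (1/2 : ℝ) := by rw [h1]
  have hwd0 : γ0.withDensity u0 = π := by
    rw [hπτ, ← hγ0d, ← withDensity_mul τ hf0m hu0m]
    refine withDensity_congr_ae ?_
    filter_upwards [hf0ae] with p hp
    show f0 p * u0 p = g p * Cf p
    calc f0 p * (Cf p * (f1 p / f0 p) ^ (1/2 : ℝ))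
        = Cf p * (f0 p * (f1 p / f0 p) ^ (1/2 : ℝ)) := by ring
      _ = Cf p * (f0 p * f1 p) ^ (1/2 : ℝ) := by rw [key _ _ hp]
      _ = g p * Cf p := mul_comm _ _
  have hwd1 : γ1.withDensity u1 = π := by
    rw [hπτ, ← hγ1d, ← withDensity_mul τ hf1m hu1m]
    refine withDensity_congr_ae ?_
    filter_upwards [hf1ae] with p hp
    show f1 p * u1 p = g p * Cf p
    calc f1 p * (Cf p * (f0 p / f1 p) ^ (1/2 : ℝ))
        = Cf p * (f1 p * (f0 p / f1 p) ^ (1/2 : ℝ)) := by ring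
      _ = Cf p * (f1 p * f0 p) ^ (1/2 : ℝ) := by rw [key _ _ hp]
      _ = g p * Cf p := by rw [mul_comm (f1 p) (f0 p)]; exact mul_comm _ _
  have hu0fin : ∫⁻ p, u0 p ∂γ0 ≠ ∞ := by
    rw [← setLIntegral_univ, ← withDensity_apply _ MeasurableSet.univ, hwd0]
    exact hπfin
  have hu1fin : ∫⁻ p, u1 p ∂γ1 ≠ ∞ := by
    rw [← setLIntegral_univ, ← withDensity_apply _ MeasurableSet.univ, hwd1]
    exact hπfin
  -- KL bounds
  have hB0 : KLdiv (π.map Prod.fst) μ0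
      ≤ ∫⁻ p, ENNReal.ofReal ((u0 p).toReal * Real.log (u0 p).toReal
          - (u0 p).toReal + 1) ∂γ0 := by
    have h := klDiv_fst_le γ0 u0 hu0m hu0fin
    rwa [hwd0, hγ0marg] at h
  have hB1 : KLdiv (π.map Prod.snd) μ1
      ≤ ∫⁻ p, ENNReal.ofReal ((u1 p).toReal * Real.log (u1 p).toReal
          - (u1 p).toReal + 1) ∂γ1 := by
    have h := klDiv_snd_le γ1 u1 hu1m hu1fin
    rwa [hwd1, hγ1marg] at h
  -- measurability of the F-integrands
  have hFm : Measurable fun t : ℝ≥0∞ =>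
      ENNReal.ofReal (t.toReal * Real.log t.toReal - t.toReal + 1) := by
    apply ENNReal.measurable_ofReal.comp
    exact ((ENNReal.measurable_toReal.mul
      (Real.measurable_log.comp ENNReal.measurable_toReal)).sub
      ENNReal.measurable_toReal).add measurable_const
  have hF0m : Measurable fun p => ENNReal.ofReal ((u0 p).toReal * Real.log (u0 p).toReal
      - (u0 p).toReal + 1) := hFm.comp hu0m
  have hF1m : Measurable fun p => ENNReal.ofReal ((u1 p).toReal * Real.log (u1 p).toReal
      - (u1 p).toReal + 1) := hFm.comp hu1m
  have hgCm : Measurable fun p => g p * Cf p := hgm.mul hCfm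
  -- rewrite the γ-integrals over τ
  have hG0 : ∫⁻ p, ENNReal.ofReal ((u0 p).toReal * Real.log (u0 p).toReal
        - (u0 p).toReal + 1) ∂γ0
      = ∫⁻ p, f0 p * ENNReal.ofReal ((u0 p).toReal * Real.log (u0 p).toReal
          - (u0 p).toReal + 1) ∂τ := by
    rw [← hγ0d, lintegral_withDensity_eq_lintegral_mul τ hf0m hF0m]
    exact lintegral_congr fun p => rfl
  have hG1 : ∫⁻ p, ENNReal.ofReal ((u1 p).toReal * Real.log (u1 p).toReal
        - (u1 p).toReal + 1) ∂γ1
      = ∫⁻ p, f1 p * ENNReal.ofReal ((u1 p).toReal * Real.log (u1 p).toReal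
          - (u1 p).toReal + 1) ∂τ := by
    rw [← hγ1d, lintegral_withDensity_eq_lintegral_mul τ hf1m hF1m]
    exact lintegral_congr fun p => rfl
  -- the cost integral
  have hcm : Measurable fun p : Eucl n × Eucl n => cHK κ p.1 p.2 := by
    unfold cHK
    refine Measurable.ite ?_ ?_ measurable_const
    · exact measurableSet_lt (continuous_fst.dist continuous_snd).measurable
        measurable_const
    · apply Measurable.ennreal_ofReal
      apply Measurable.const_mul
      exact (Real.measurable_log.comp
        (Real.continuous_cos.measurable.comp
          ((continuous_fst.dist continuous_snd).div_const κ).measurable))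
  have hcost : ∫⁻ p, cHK κ p.1 p.2 ∂π
      = ∫⁻ p, (g p * Cf p) * cHK κ p.1 p.2 ∂τ := by
    rw [hπτ, lintegral_withDensity_eq_lintegral_mul τ hgCm hcm]
    exact lintegral_congr fun p => rfl
  -- the grand pointwise identity, integrated
  have hmain : ∫⁻ p, ((g p * Cf p) * cHK κ p.1 p.2
        + ENNReal.ofReal (κ ^ 2) * (f0 p * ENNReal.ofReal ((u0 p).toReal
            * Real.log (u0 p).toReal - (u0 p).toReal + 1)
          + f1 p * ENNReal.ofReal ((u1 p).toReal * Real.log (u1 p).toReal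
            - (u1 p).toReal + 1)
          + 2 * (g p * Cf p))) ∂τ
      = ENNReal.ofReal (κ ^ 2) * (γ0 Set.univ + γ1 Set.univ) := by
    have hptw : ∀ᵐ p ∂τ, (g p * Cf p) * cHK κ p.1 p.2
        + ENNReal.ofReal (κ ^ 2) * (f0 p * ENNReal.ofReal ((u0 p).toReal
            * Real.log (u0 p).toReal - (u0 p).toReal + 1)
          + f1 p * ENNReal.ofReal ((u1 p).toReal * Real.log (u1 p).toReal
            - (u1 p).toReal + 1)
          + 2 * (g p * Cf p))
        = ENNReal.ofReal (κ ^ 2) * (f0 p + f1 p) := by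
      filter_upwards [hf0ae, hf1ae] with p h0 h1
      have hpk := pointwise_key κ (dist p.1 p.2) hκ dist_nonneg (f0 p) (f1 p) h0 h1
      have hcp : cHK κ p.1 p.2 = (if dist p.1 p.2 < κ * Real.pi / 2 then
          ENNReal.ofReal (-2 * κ ^ 2 * Real.log (Real.cos (dist p.1 p.2 / κ))) else ⊤) := rfl
      rw [hcp]
      rw [show g p * Cf p = Cf p * (f0 p * f1 p) ^ (1/2 : ℝ) from mul_comm _ _]
      exact hpk
    rw [lintegral_congr_ae hptw, lintegral_const_mul _ (f := fun p => f0 p + f1 p) (hf0m.add hf1m),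
      lintegral_add_left hf0m, Measure.lintegral_rnDeriv hac0, Measure.lintegral_rnDeriv hac1]
  -- split the left-hand side of `hmain`
  have hsplit : ∫⁻ p, ((g p * Cf p) * cHK κ p.1 p.2
        + ENNReal.ofReal (κ ^ 2) * (f0 p * ENNReal.ofReal ((u0 p).toReal
            * Real.log (u0 p).toReal - (u0 p).toReal + 1)
          + f1 p * ENNReal.ofReal ((u1 p).toReal * Real.log (u1 p).toReal
            - (u1 p).toReal + 1)
          + 2 * (g p * Cf p))) ∂τ
      = ∫⁻ p, (g p * Cf p) * cHK κ p.1 p.2 ∂τ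
        + ENNReal.ofReal (κ ^ 2) * (∫⁻ p, f0 p * ENNReal.ofReal ((u0 p).toReal
            * Real.log (u0 p).toReal - (u0 p).toReal + 1) ∂τ
          + ∫⁻ p, f1 p * ENNReal.ofReal ((u1 p).toReal * Real.log (u1 p).toReal
            - (u1 p).toReal + 1) ∂τ
          + 2 * ∫⁻ p, g p * Cf p ∂τ) := by
    have hX : Measurable fun p => (g p * Cf p) * cHK κ p.1 p.2 := hgCm.mul hcm
    have hY0 : Measurable fun p => f0 p * ENNReal.ofReal ((u0 p).toReal
        * Real.log (u0 p).toReal - (u0 p).toReal + 1) := hf0m.mul hF0m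
    have hY1 : Measurable fun p => f1 p * ENNReal.ofReal ((u1 p).toReal
        * Real.log (u1 p).toReal - (u1 p).toReal + 1) := hf1m.mul hF1m
    rw [lintegral_add_left hX,
      lintegral_const_mul _ (f := fun p => f0 p * ENNReal.ofReal ((u0 p).toReal
          * Real.log (u0 p).toReal - (u0 p).toReal + 1) + f1 p * ENNReal.ofReal ((u1 p).toReal
          * Real.log (u1 p).toReal - (u1 p).toReal + 1) + 2 * (g p * Cf p))
        (((hY0.add hY1)).add ((measurable_const.mul hgCm :
        Measurable fun p => 2 * (g p * Cf p)))),
      lintegral_add_left (f := fun p => f0 p * ENNReal.ofReal ((u0 p).toReal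
          * Real.log (u0 p).toReal - (u0 p).toReal + 1) + f1 p * ENNReal.ofReal ((u1 p).toReal
          * Real.log (u1 p).toReal - (u1 p).toReal + 1)) (hY0.add hY1),
      lintegral_add_left hY0,
      lintegral_const_mul _ hgCm]
  -- combine with the optimality hypothesis
  have h2Ifin : ENNReal.ofReal (κ ^ 2) * (2 * ∫⁻ p, g p * Cf p ∂τ) ≠ ∞ :=
    ENNReal.mul_ne_top ENNReal.ofReal_ne_top
      (ENNReal.mul_ne_top (by norm_num) hIfin)
  have hopt' : ENNReal.ofReal (κ ^ 2) * (γ0 Set.univ + γ1 Set.univ)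
      = HK2 κ μ0 μ1 + ENNReal.ofReal (κ ^ 2) * (2 * ∫⁻ p, g p * Cf p ∂τ) := by
    rw [← hI]
    exact hγopt
  have hfinal : ∫⁻ p, cHK κ p.1 p.2 ∂π
        + ENNReal.ofReal (κ ^ 2) * ∫⁻ p, ENNReal.ofReal ((u0 p).toReal
            * Real.log (u0 p).toReal - (u0 p).toReal + 1) ∂γ0
        + ENNReal.ofReal (κ ^ 2) * ∫⁻ p, ENNReal.ofReal ((u1 p).toReal
            * Real.log (u1 p).toReal - (u1 p).toReal + 1) ∂γ1
      = HK2 κ μ0 μ1 := by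
    have hassoc : ∫⁻ p, cHK κ p.1 p.2 ∂π
          + ENNReal.ofReal (κ ^ 2) * ∫⁻ p, ENNReal.ofReal ((u0 p).toReal
              * Real.log (u0 p).toReal - (u0 p).toReal + 1) ∂γ0
          + ENNReal.ofReal (κ ^ 2) * ∫⁻ p, ENNReal.ofReal ((u1 p).toReal
              * Real.log (u1 p).toReal - (u1 p).toReal + 1) ∂γ1
          + ENNReal.ofReal (κ ^ 2) * (2 * ∫⁻ p, g p * Cf p ∂τ)
        = ENNReal.ofReal (κ ^ 2) * (γ0 Set.univ + γ1 Set.univ) := by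
      rw [hcost, hG0, hG1, ← hmain, hsplit]
      ring
    rw [hopt'] at hassoc
    exact (ENNReal.add_left_inj h2Ifin).1 hassoc
  refine le_antisymm ?_ ?_
  · calc HKfun κ π μ0 μ1
        ≤ ∫⁻ p, cHK κ p.1 p.2 ∂π
          + ENNReal.ofReal (κ ^ 2) * ∫⁻ p, ENNReal.ofReal ((u0 p).toReal
              * Real.log (u0 p).toReal - (u0 p).toReal + 1) ∂γ0
          + ENNReal.ofReal (κ ^ 2) * ∫⁻ p, ENNReal.ofReal ((u1 p).toReal
              * Real.log (u1 p).toReal - (u1 p).toReal + 1) ∂γ1 := by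
          unfold HKfun
          exact add_le_add (add_le_add le_rfl (mul_le_mul_right hB0 _))
            (mul_le_mul_right hB1 _)
      _ = HK2 κ μ0 μ1 := hfinal
  · unfold HK2
    exact iInf₂_le π hπF
end

section
/- Let n ≥ 1, κ > 0 and x0, x1 ∈ ℝ^n with |x0−x1| < κπ/2. Then the spherical Hellinger–Kantorovich distance between the Dirac measures δ_{x0} and δ_{x1} equals the Euclidean distance: SHK_κ(δ_{x0}, δ_{x1}) = |x0 − x1|. -/
open MeasureTheory ENNReal Filter Topology RealInnerProductSpace
open scoped Classical

section Aux

lemma key_ineq (t m : ℝ) (hm : 0 ≤ m) :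
    1 - Real.exp (-t) ≤ m * t + (m * Real.log m - m + 1) := by
  rcases eq_or_lt_of_le hm with h0 | h0
  · simp only [← h0, zero_mul, Real.log_zero, mul_zero, zero_sub, sub_self]
    have := Real.exp_pos (-t); linarith
  · have hexp : Real.exp (-t) = m * Real.exp (-(t + Real.log m)) := by
      rw [neg_add, Real.exp_add, Real.exp_neg (Real.log m), Real.exp_log h0]
      field_simp
    have h1 : -(t + Real.log m) + 1 ≤ Real.exp (-(t + Real.log m)) := Real.add_one_le_exp _
    nlinarith

lemma meas_eq_smul_dirac {α : Type*} [MeasurableSpace α] [MeasurableSingletonClass α]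
    (μ : Measure α) (p : α) (h : μ {p}ᶜ = 0) :
    μ = μ Set.univ • Measure.dirac p := by
  ext s hs
  rw [Measure.smul_apply, Measure.dirac_apply' p hs, smul_eq_mul]
  by_cases hp : p ∈ s
  · have h1 : μ Set.univ ≤ μ s := by
      calc μ Set.univ ≤ μ (s ∪ {p}ᶜ) := measure_mono (fun x _ => by
        by_cases hx : x = p
        · exact Or.inl (hx ▸ hp)
        · exact Or.inr hx)
      _ ≤ μ s + μ {p}ᶜ := measure_union_le _ _
      _ = μ s := by rw [h, add_zero]
    rw [Set.indicator_of_mem hp, Pi.one_apply, mul_one]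
    exact le_antisymm (measure_mono (Set.subset_univ s)) h1
  · rw [Set.indicator_of_notMem hp, mul_zero]
    exact le_antisymm (le_trans (measure_mono (fun x hx (hxp : x = p) => hp (hxp ▸ hx))) h.le)
      zero_le


lemma KL_smul_dirac {α : Type*} [MeasurableSpace α] [MeasurableSingletonClass α]
    (x : α) (M : ℝ≥0∞) (hM : M ≠ ⊤) :
    KLdiv (M • Measure.dirac x) (Measure.dirac x)
      = ENNReal.ofReal (M.toReal * Real.log M.toReal - M.toReal + 1) := by
  have hac : (M • Measure.dirac x) ≪ Measure.dirac x := Measure.smul_absolutelyContinuous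
  rw [KLdiv, if_pos hac]
  have hrn : (M • Measure.dirac x).rnDeriv (Measure.dirac x)
      =ᵐ[Measure.dirac x] fun _ => M := by
    filter_upwards [Measure.rnDeriv_smul_left_of_ne_top (Measure.dirac x) (Measure.dirac x) hM,
      Measure.rnDeriv_self (Measure.dirac x)] with y h1 h2
    rw [h1, Pi.smul_apply, h2, smul_eq_mul, mul_one]
  calc ∫⁻ y, ENNReal.ofReal (((M • Measure.dirac x).rnDeriv (Measure.dirac x) y).toReal *
        Real.log ((M • Measure.dirac x).rnDeriv (Measure.dirac x) y).toReal
        - ((M • Measure.dirac x).rnDeriv (Measure.dirac x) y).toReal + 1) ∂(Measure.dirac x)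
      = ∫⁻ _, ENNReal.ofReal (M.toReal * Real.log M.toReal - M.toReal + 1) ∂(Measure.dirac x) := by
        apply lintegral_congr_ae
        filter_upwards [hrn] with y hy
        rw [hy]
    _ = ENNReal.ofReal (M.toReal * Real.log M.toReal - M.toReal + 1) := by
        rw [lintegral_const, measure_univ, mul_one]

lemma HKfun_smul_dirac {n : ℕ} (κ : ℝ) (hκ : 0 < κ) (x0 x1 : Eucl n)
    (hd : dist x0 x1 < κ * Real.pi / 2) (M : ℝ≥0∞) (hM : M ≠ ⊤) :
    HKfun κ (M • Measure.dirac (x0, x1)) (Measure.dirac x0) (Measure.dirac x1)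
      = ENNReal.ofReal (M.toReal * (-2 * κ ^ 2 * Real.log (Real.cos (dist x0 x1 / κ))))
        + ENNReal.ofReal (κ ^ 2) *
          ENNReal.ofReal (M.toReal * Real.log M.toReal - M.toReal + 1)
        + ENNReal.ofReal (κ ^ 2) *
          ENNReal.ofReal (M.toReal * Real.log M.toReal - M.toReal + 1) := by
  have hmap0 : (M • Measure.dirac (x0, x1)).map Prod.fst = M • Measure.dirac x0 := by
    rw [Measure.map_smul, Measure.map_dirac' measurable_fst]
  have hmap1 : (M • Measure.dirac (x0, x1)).map Prod.snd = M • Measure.dirac x1 := by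
    rw [Measure.map_smul, Measure.map_dirac' measurable_snd]
  rw [HKfun, hmap0, hmap1, KL_smul_dirac _ _ hM, KL_smul_dirac _ _ hM]
  congr 2
  rw [lintegral_smul_measure, lintegral_dirac, cHK]
  simp only []
  rw [if_pos hd, ← ENNReal.ofReal_toReal hM, smul_eq_mul,
    ← ENNReal.ofReal_mul ENNReal.toReal_nonneg,
    ENNReal.toReal_ofReal ENNReal.toReal_nonneg]

end Aux

/-- the SHK distance between Dirac measures equals the Euclidean distance. -/
theorem shk_between_diracs
    {n : ℕ} (hn : 1 ≤ n) (κ : ℝ) (hκ : 0 < κ)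
    (x0 x1 : Eucl n) (hd : dist x0 x1 < κ * Real.pi / 2) :
    SHK κ (Measure.dirac x0) (Measure.dirac x1) = dist x0 x1 := by
  have hd0 : 0 ≤ dist x0 x1 := dist_nonneg
  have hθ : dist x0 x1 / κ < Real.pi / 2 := by
    rw [div_lt_iff₀ hκ]; linarith
  have hθ0 : 0 ≤ dist x0 x1 / κ := div_nonneg hd0 hκ.le
  set m : ℝ := Real.cos (dist x0 x1 / κ) with hmdef
  have hm0 : 0 < m := Real.cos_pos_of_mem_Ioo ⟨by linarith [Real.pi_pos], hθ⟩
  have hm1 : m ≤ 1 := Real.cos_le_one _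
  set c : ℝ := -2 * κ ^ 2 * Real.log m with hcdef
  have hlogm : Real.log m ≤ 0 := Real.log_nonpos hm0.le hm1
  have hκ2 : (0:ℝ) < κ ^ 2 := by positivity
  have hc0 : 0 ≤ c := by nlinarith
  have hf : ∀ M : ℝ, 0 ≤ M → 0 ≤ M * Real.log M - M + 1 := by
    intro M hM
    have := key_ineq 0 M hM
    simp only [neg_zero, Real.exp_zero, sub_self, mul_zero, zero_add] at this
    linarith
  have hkey : ∀ M : ℝ, 0 ≤ M →
      2 * κ ^ 2 * (1 - m) ≤ M * c + 2 * κ ^ 2 * (M * Real.log M - M + 1) := by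
    intro M hM
    have ht : Real.exp (-(-Real.log m)) = m := by
      rw [neg_neg, Real.exp_log hm0]
    have h := key_ineq (-Real.log m) M hM
    rw [ht] at h
    have : M * c = 2 * κ ^ 2 * (M * (-Real.log m)) := by rw [hcdef]; ring
    nlinarith
  have hHK2 : HK2 κ (Measure.dirac x0) (Measure.dirac x1)
      = ENNReal.ofReal (2 * κ ^ 2 * (1 - m)) := by
    apply le_antisymm
    · -- upper bound via π = m • δ_(x0,x1)
      have hfin : IsFiniteMeasure ((ENNReal.ofReal m) • Measure.dirac (x0, x1)) := by
        constructor
        rw [Measure.smul_apply, measure_univ, smul_eq_mul, mul_one]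
        exact ENNReal.ofReal_lt_top
      refine le_trans (iInf₂_le _ hfin) ?_
      rw [HKfun_smul_dirac κ hκ x0 x1 hd _ ENNReal.ofReal_ne_top,
        ENNReal.toReal_ofReal hm0.le]
      have hfm : 0 ≤ m * Real.log m - m + 1 := hf m hm0.le
      rw [← ENNReal.ofReal_mul hκ2.le,
        ← ENNReal.ofReal_add (by positivity) (mul_nonneg hκ2.le hfm),
        ← ENNReal.ofReal_add (add_nonneg (by positivity) (mul_nonneg hκ2.le hfm))
          (mul_nonneg hκ2.le hfm)]
      apply le_of_eq
      congr 1
      rw [← hmdef]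
      ring
    · -- lower bound
      refine le_iInf fun π => le_iInf fun hπ => ?_
      haveI := hπ
      by_cases hac0 : π.map Prod.fst ≪ Measure.dirac x0
      · by_cases hac1 : π.map Prod.snd ≪ Measure.dirac x1
        · -- π is concentrated at (x0, x1)
          have h0 : π (Prod.fst ⁻¹' {x0}ᶜ) = 0 := by
            rw [← Measure.map_apply measurable_fst (measurableSet_singleton x0).compl]
            exact hac0 (by simp)
          have h1 : π (Prod.snd ⁻¹' {x1}ᶜ) = 0 := by
            rw [← Measure.map_apply measurable_snd (measurableSet_singleton x1).compl]
            exact hac1 (by simp)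
          have hnull : π {((x0, x1) : Eucl n × Eucl n)}ᶜ = 0 := by
            refine le_antisymm ?_ zero_le
            calc π {((x0, x1) : Eucl n × Eucl n)}ᶜ
                ≤ π ((Prod.fst ⁻¹' {x0}ᶜ) ∪ (Prod.snd ⁻¹' {x1}ᶜ)) := by
                  apply measure_mono
                  intro q hq
                  by_cases hq1 : q.1 = x0
                  · right
                    intro hq2
                    exact hq (by simp only [Set.mem_singleton_iff] at hq2 ⊢; exact Prod.ext hq1 hq2)
                  · exact Or.inl hq1
              _ ≤ π (Prod.fst ⁻¹' {x0}ᶜ) + π (Prod.snd ⁻¹' {x1}ᶜ) := measure_union_le _ _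
              _ = 0 := by rw [h0, h1, add_zero]
          have hπeq : π = π Set.univ • Measure.dirac (x0, x1) :=
            meas_eq_smul_dirac π (x0, x1) hnull
          have hM : π Set.univ ≠ ⊤ := measure_ne_top π _
          rw [hπeq, HKfun_smul_dirac κ hκ x0 x1 hd _ hM]
          set M : ℝ := (π Set.univ).toReal with hMdef
          have hM0 : 0 ≤ M := ENNReal.toReal_nonneg
          have hfM : 0 ≤ M * Real.log M - M + 1 := hf M hM0
          rw [← ENNReal.ofReal_mul hκ2.le,
            ← ENNReal.ofReal_add (mul_nonneg hM0 hc0) (mul_nonneg hκ2.le hfM),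
            ← ENNReal.ofReal_add (add_nonneg (mul_nonneg hM0 hc0) (mul_nonneg hκ2.le hfM))
              (mul_nonneg hκ2.le hfM)]
          apply ENNReal.ofReal_le_ofReal
          have := hkey M hM0
          linarith
        · have hKL : KLdiv (π.map Prod.snd) (Measure.dirac x1) = ⊤ := if_neg hac1
          rw [HKfun, hKL, ENNReal.mul_top (ENNReal.ofReal_pos.mpr hκ2).ne', add_top]
          exact le_top
      · have hKL : KLdiv (π.map Prod.fst) (Measure.dirac x0) = ⊤ := if_neg hac0
        rw [HKfun, hKL, ENNReal.mul_top (ENNReal.ofReal_pos.mpr hκ2).ne', add_top, top_add]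
        exact le_top
  rw [SHK, hHK2, ENNReal.toReal_ofReal (by nlinarith)]
  have h1 : 1 - 2 * κ ^ 2 * (1 - m) / (2 * κ ^ 2) = m := by
    field_simp
    ring
  rw [h1, hmdef, Real.arccos_cos hθ0 (by linarith [Real.pi_pos]),
    mul_div_cancel₀ _ hκ.ne']
end
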